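/- arXiv:2302.03719 — 7 statements merged into one kernel-verified Lean document; each statement's English description precedes it below -/
import Mathlib

section
/- Fix a signaling scheme π and parameters 0 ≤ γ and 0 ≤ δ < 1. For any (γ,δ)-best-responding receiver strategy ρ, there exists a γ-best-responding receiver strategy ρ̃ such that |U_μ(π,ρ) − U_μ(π,ρ̃)| ≤ δ. -/
open Finset
open scoped BigOperators Classical

noncomputable section

/-- `p` is a family of probability distributions on the finite set `β`, indexed by `α`. -/
def IsDist {α β : Type*} [Fintype β] (p : α → β → ℝ) : Prop :=
  (∀ x y, 0 ≤ p x y) ∧ ∀ x, ∑ y, p x y = 1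

/-- `p` is a probability distribution on the finite set `β`. -/
def IsProb {β : Type*} [Fintype β] (p : β → ℝ) : Prop :=
  (∀ y, 0 ≤ p y) ∧ ∑ y, p y = 1

/-- The marginal probability `π(s)` of signal `s` under prior `μ` and signaling scheme `π`. -/
def marg {Ω S : Type*} [Fintype Ω] (μ : Ω → ℝ) (π : Ω → S → ℝ) (s : S) : ℝ :=
  ∑ ω, μ ω * π ω s

/-- The posterior probability `π(ω|s)` of state `ω` given signal `s`. -/
def post {Ω S : Type*} [Fintype Ω] (μ : Ω → ℝ) (π : Ω → S → ℝ) (ω : Ω) (s : S) : ℝ :=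
  μ ω * π ω s / marg μ π s

/-- The receiver's expected utility `v(a, μ_s)` of action `a` under the posterior of signal `s`. -/
def vPost {Ω S A : Type*} [Fintype Ω] (μ : Ω → ℝ) (π : Ω → S → ℝ)
    (v : A → Ω → ℝ) (a : A) (s : S) : ℝ :=
  ∑ ω, post μ π ω s * v a ω

/-- Action `a` is `γ`-best-responding to signal `s`. -/
def IsBR {Ω S A : Type*} [Fintype Ω] [Fintype A] (μ : Ω → ℝ) (π : Ω → S → ℝ)
    (v : A → Ω → ℝ) (γ : ℝ) (a : A) (s : S) : Prop :=
  ∀ a' : A, vPost μ π v a' s - γ ≤ vPost μ π v a s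

/-- `ρ` is a `γ`-best-responding receiver strategy: on every signal that is sent with positive
probability, it puts probability `1` on `γ`-best-responding actions (equivalently, probability `0`
on every action that is not `γ`-best-responding). -/
def IsBRStrategy {Ω S A : Type*} [Fintype Ω] [Fintype A] (μ : Ω → ℝ) (π : Ω → S → ℝ)
    (v : A → Ω → ℝ) (γ : ℝ) (ρ : S → A → ℝ) : Prop :=
  ∀ s, 0 < marg μ π s → ∀ a, ¬ IsBR μ π v γ a s → ρ s a = 0

/-- `ρ` is a `(γ, δ)`-best-responding receiver strategy: on every signal that is sent with
positive probability, it puts probability at least `1 - δ` on `γ`-best-responding actions. -/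
def IsApproxBRStrategy {Ω S A : Type*} [Fintype Ω] [Fintype A] (μ : Ω → ℝ) (π : Ω → S → ℝ)
    (v : A → Ω → ℝ) (γ δ : ℝ) (ρ : S → A → ℝ) : Prop :=
  ∀ s, 0 < marg μ π s →
    1 - δ ≤ ∑ a ∈ Finset.univ.filter (fun a => IsBR μ π v γ a s), ρ s a

/-- The sender's expected utility `U_μ(π, ρ)`. -/
def senderU {Ω S A : Type*} [Fintype Ω] [Fintype S] [Fintype A] (μ : Ω → ℝ) (π : Ω → S → ℝ)
    (u : A → Ω → ℝ) (ρ : S → A → ℝ) : ℝ :=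
  ∑ ω, ∑ s, μ ω * π ω s * ∑ a, ρ s a * u a ω

/-- The obedient strategy for a direct-revelation scheme: take the recommended action. -/
def obedient {A : Type*} : A → A → ℝ := fun s a => if a = s then 1 else 0

/-- `OPT^BP(μ)`: the supremum of the sender's expected utility over direct-revelation schemes
(signal set `S = A`) and best-responding (`0`-best-responding) receiver strategies. -/
def OPTBP {Ω A : Type*} [Fintype Ω] [Fintype A] (μ : Ω → ℝ) (v u : A → Ω → ℝ) : ℝ :=
  sSup {x | ∃ (π : Ω → A → ℝ) (ρ : A → A → ℝ), IsDist π ∧ IsDist ρ ∧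
    IsBRStrategy μ π v 0 ρ ∧ x = senderU μ π u ρ}

/-- The `α`-robustification of a direct-revelation scheme `π`, where `aOf ω` is the receiver's
unique optimal action at state `ω`. -/
def robustify {Ω A : Type*} (π : Ω → A → ℝ) (aOf : Ω → A) (α : ℝ) : Ω → A → ℝ :=
  fun ω s => (1 - α) * π ω s + if s = aOf ω then α else 0

/-- `μ(Ω_a)`: the prior mass of the set of states whose unique optimal action is `a`. -/
def massOf {Ω A : Type*} [Fintype Ω] (μ : Ω → ℝ) (aOf : Ω → A) (a : A) : ℝ :=
  ∑ ω ∈ Finset.univ.filter (fun ω => aOf ω = a), μ ω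

/-- `μ_min = min_ω μ(ω)`. -/
def minPrior {Ω : Type*} [Fintype Ω] [Nonempty Ω] (μ : Ω → ℝ) : ℝ :=
  Finset.univ.inf' Finset.univ_nonempty μ

/-- The advantage term of recommendation `s` against deviation `a` in a direct-revelation
scheme `π`: the advantage `adv_π(s)` is the minimum of this quantity over `a ≠ s`. -/
def advTerm {Ω A : Type*} [Fintype Ω] (μ : Ω → ℝ) (π : Ω → A → ℝ) (v : A → Ω → ℝ)
    (s a : A) : ℝ :=
  ∑ ω, post μ π ω s * (v s ω - v a ω)

/-- Lemma 2.1: for any `(γ, δ)`-best-responding receiver strategy `ρ`, there is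
a `γ`-best-responding receiver strategy `ρ̃` with `|U_μ(π, ρ) - U_μ(π, ρ̃)| ≤ δ`. -/
theorem restrict_to_gamma_best
    {Ω S A : Type*} [Fintype Ω] [Fintype S] [Fintype A]
    [Nonempty Ω] [Nonempty S] [Nonempty A]
    (μ : Ω → ℝ) (hμ : IsProb μ)
    (π : Ω → S → ℝ) (hπ : IsDist π)
    (v : A → Ω → ℝ) (hv : ∀ a ω, 0 ≤ v a ω ∧ v a ω ≤ 1)
    (u : A → Ω → ℝ) (hu : ∀ a ω, 0 ≤ u a ω ∧ u a ω ≤ 1)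
    (γ δ : ℝ) (hγ : 0 ≤ γ) (hδ0 : 0 ≤ δ) (hδ1 : δ < 1)
    (ρ : S → A → ℝ) (hρ : IsDist ρ) (hρBR : IsApproxBRStrategy μ π v γ δ ρ) :
    ∃ ρ' : S → A → ℝ, IsDist ρ' ∧ IsBRStrategy μ π v γ ρ' ∧
      |senderU μ π u ρ - senderU μ π u ρ'| ≤ δ := by
  classical
  obtain ⟨hρ1, hρ2⟩ := hρ
  set m : S → ℝ := fun s => ∑ a ∈ Finset.univ.filter (fun a => IsBR μ π v γ a s), ρ s a with hm
  have hm_le : ∀ s, m s ≤ 1 := by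
    intro s
    rw [hm, ← hρ2 s]
    exact Finset.sum_le_sum_of_subset_of_nonneg (Finset.filter_subset _ _)
      (fun a _ _ => hρ1 s a)
  have hm_pos : ∀ s, 0 < marg μ π s → 0 < m s := by
    intro s hs
    have := hρBR s hs
    simp only [hm]
    linarith
  have hm_ge : ∀ s, 0 < marg μ π s → 1 - δ ≤ m s := fun s hs => hρBR s hs
  set ρ' : S → A → ℝ := fun s a =>
    if 0 < marg μ π s then (if IsBR μ π v γ a s then ρ s a / m s else 0) else ρ s a with hρ'd
  refine ⟨ρ', ⟨?_, ?_⟩, ?_, ?_⟩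
  · intro s a
    simp only [hρ'd]
    split_ifs with h1 h2
    · exact div_nonneg (hρ1 s a) (hm_pos s h1).le
    · exact le_refl 0
    · exact hρ1 s a
  · intro s
    simp only [hρ'd]
    by_cases h1 : 0 < marg μ π s
    · simp only [if_pos h1]
      rw [show ∑ a, (if IsBR μ π v γ a s then ρ s a / m s else 0)
          = (∑ a ∈ Finset.univ.filter (fun a => IsBR μ π v γ a s), ρ s a) / m s by
        rw [Finset.sum_div, Finset.sum_filter]]
      exact div_self (hm_pos s h1).ne'
    · simp only [if_neg h1]
      exact hρ2 s
  · intro s hs a hnot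
    simp only [hρ'd, if_pos hs, if_neg hnot]
  · -- the utility bound
    have key : ∀ s ω, |∑ a, (ρ s a - ρ' s a) * u a ω| ≤ δ := by
      intro s ω
      by_cases h1 : 0 < marg μ π s
      · set F := Finset.univ.filter (fun a => IsBR μ π v γ a s) with hF
        have hmp := hm_pos s h1
        have hsplit := Finset.sum_filter_add_sum_filter_not Finset.univ
          (fun a => IsBR μ π v γ a s) (fun a => (ρ s a - ρ' s a) * u a ω)
        have hin : ∀ a ∈ F, ρ s a - ρ' s a = ρ s a - ρ s a / m s := by
          intro a ha
          simp only [hF, Finset.mem_filter] at ha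
          simp [hρ'd, if_pos h1, ha.2]
        have hout : ∀ a ∈ Finset.univ.filter (fun a => ¬ IsBR μ π v γ a s),
            ρ s a - ρ' s a = ρ s a := by
          intro a ha
          simp only [Finset.mem_filter] at ha
          simp [hρ'd, if_pos h1, ha.2]
        have hterm_nonpos : ∀ a, ρ s a - ρ s a / m s ≤ 0 := by
          intro a
          have : ρ s a * m s ≤ ρ s a * 1 :=
            mul_le_mul_of_nonneg_left (hm_le s) (hρ1 s a)
          rw [sub_nonpos, le_div_iff₀ hmp]
          linarith
        have hsum_out : ∑ a ∈ Finset.univ.filter (fun a => ¬ IsBR μ π v γ a s), ρ s a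
            = 1 - m s := by
          have := Finset.sum_filter_add_sum_filter_not Finset.univ
            (fun a => IsBR μ π v γ a s) (ρ s)
          rw [hρ2 s] at this
          simp only [hm, hF]
          linarith
        have hFm : ∑ a ∈ F, ρ s a = m s := rfl
        have hsum_in : ∑ a ∈ F, (ρ s a - ρ s a / m s) = m s - 1 := by
          rw [Finset.sum_sub_distrib, ← Finset.sum_div, hFm, div_self hmp.ne']
        rw [abs_le]
        constructor
        · -- lower bound: m s - 1 ≤ D
          have h1' : ∑ a ∈ F, (ρ s a - ρ' s a) * u a ω ≥ m s - 1 := by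
            rw [← hsum_in]
            apply Finset.sum_le_sum
            intro a ha
            rw [hin a ha]
            nlinarith [mul_nonneg (neg_nonneg.2 (hterm_nonpos a))
              (sub_nonneg.2 (hu a ω).2), hterm_nonpos a]
          have h2' : (0:ℝ) ≤ ∑ a ∈ Finset.univ.filter (fun a => ¬ IsBR μ π v γ a s),
              (ρ s a - ρ' s a) * u a ω := by
            apply Finset.sum_nonneg
            intro a ha
            rw [hout a ha]
            exact mul_nonneg (hρ1 s a) (hu a ω).1
          have := hm_ge s h1
          linarith [hsplit]
        · -- upper bound: D ≤ 1 - m s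
          have h1' : ∑ a ∈ F, (ρ s a - ρ' s a) * u a ω ≤ 0 := by
            apply Finset.sum_nonpos
            intro a ha
            rw [hin a ha]
            exact mul_nonpos_of_nonpos_of_nonneg (hterm_nonpos a) (hu a ω).1
          have h2' : ∑ a ∈ Finset.univ.filter (fun a => ¬ IsBR μ π v γ a s),
              (ρ s a - ρ' s a) * u a ω ≤ 1 - m s := by
            rw [← hsum_out]
            apply Finset.sum_le_sum
            intro a ha
            rw [hout a ha]
            calc ρ s a * u a ω ≤ ρ s a * 1 :=
              mul_le_mul_of_nonneg_left (hu a ω).2 (hρ1 s a)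
            _ = ρ s a := mul_one _
          have := hm_ge s h1
          linarith [hsplit]
      · have : ∀ a, ρ s a - ρ' s a = 0 := by
          intro a; simp [hρ'd, if_neg h1]
        simp [this]
        exact hδ0
    have hdiff : senderU μ π u ρ - senderU μ π u ρ'
        = ∑ ω, ∑ s, μ ω * π ω s * ∑ a, (ρ s a - ρ' s a) * u a ω := by
      unfold senderU
      rw [← Finset.sum_sub_distrib]
      apply Finset.sum_congr rfl
      intro ω _
      rw [← Finset.sum_sub_distrib]
      apply Finset.sum_congr rfl
      intro s _
      rw [← mul_sub, ← Finset.sum_sub_distrib]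
      congr 1
      apply Finset.sum_congr rfl
      intro a _
      ring
    rw [hdiff]
    calc |∑ ω, ∑ s, μ ω * π ω s * ∑ a, (ρ s a - ρ' s a) * u a ω|
        ≤ ∑ ω, ∑ s, |μ ω * π ω s * ∑ a, (ρ s a - ρ' s a) * u a ω| := by
          apply (Finset.abs_sum_le_sum_abs _ _).trans
          apply Finset.sum_le_sum
          intro ω _
          exact Finset.abs_sum_le_sum_abs _ _
      _ ≤ ∑ ω, ∑ s, μ ω * π ω s * δ := by
          apply Finset.sum_le_sum
          intro ω _
          apply Finset.sum_le_sum
          intro s _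
          rw [abs_mul, abs_of_nonneg (mul_nonneg (hμ.1 ω) (hπ.1 ω s))]
          exact mul_le_mul_of_nonneg_left (key s ω) (mul_nonneg (hμ.1 ω) (hπ.1 ω s))
      _ = δ := by
          have h : ∀ ω, ∑ s, μ ω * π ω s * δ = μ ω * δ := by
            intro ω
            calc ∑ s, μ ω * π ω s * δ = μ ω * δ * ∑ s, π ω s := by
                  rw [Finset.mul_sum]; apply Finset.sum_congr rfl; intros; ring
              _ = μ ω * δ := by rw [hπ.2 ω, mul_one]
          simp only [h]
          rw [← Finset.sum_mul, hμ.2, one_mul]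
end
end

section
/- Assume Assumption A holds, that μ(ω) > 0 for every ω ∈ Ω (write μ_min = min_ω μ(ω)), that 0 ≤ γ with γ/(μ_min·Δ) < 1, and 0 ≤ δ < 1. Then: (i) for every ε > 0 there exists a direct-revelation signaling scheme π (with signal set S = A) such that U_μ(π,ρ) ≥ OPT^BP(μ) − γ/(μ_min·Δ) − δ − ε for every (γ,δ)-best-responding receiver strategy ρ; and (ii) for every finite nonempty signal set S, every signaling scheme π on S, and every (γ,δ)-best-responding receiver strategy ρ, it holds that U_μ(π,ρ) ≤ OPT^BP(μ) + γ/(μ_min·Δ) + δ. -/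
open Finset
open scoped BigOperators Classical

noncomputable section

set_option linter.unusedSectionVars false

section Helpers

variable {Ω S A : Type*} [Fintype Ω] [Fintype S] [Fintype A]

/-- Composition of a scheme and a strategy: the induced direct-revelation scheme. -/
def compose (π : Ω → S → ℝ) (ρ : S → A → ℝ) : Ω → A → ℝ := fun ω a => ∑ s, π ω s * ρ s a

/-- Unnormalized advantage of action `a` over `b` at signal `s`. -/
def numv (μ : Ω → ℝ) (π : Ω → S → ℝ) (v : A → Ω → ℝ) (s : S) (a b : A) : ℝ :=
  ∑ ω, μ ω * π ω s * (v a ω - v b ω)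

lemma marg_nonneg {μ : Ω → ℝ} {π : Ω → S → ℝ} (hμ : IsProb μ) (hπ : IsDist π) (s : S) :
    0 ≤ marg μ π s :=
  Finset.sum_nonneg fun ω _ => mul_nonneg (hμ.1 ω) (hπ.1 ω s)

lemma joint_eq_zero {μ : Ω → ℝ} {π : Ω → S → ℝ} (hμ : IsProb μ) (hπ : IsDist π) {s : S}
    (h : marg μ π s = 0) (ω : Ω) : μ ω * π ω s = 0 := by
  have := (Finset.sum_eq_zero_iff_of_nonneg
    (fun ω _ => mul_nonneg (hμ.1 ω) (hπ.1 ω s))).1 h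
  exact this ω (Finset.mem_univ ω)

lemma pi_le_one {π : Ω → S → ℝ} (hπ : IsDist π) (ω : Ω) (s : S) : π ω s ≤ 1 := by
  have := Finset.single_le_sum (f := fun t => π ω t) (fun t _ => hπ.1 ω t) (Finset.mem_univ s)
  simpa [hπ.2 ω] using this

lemma marg_le_one {μ : Ω → ℝ} {π : Ω → S → ℝ} (hμ : IsProb μ) (hπ : IsDist π) (s : S) :
    marg μ π s ≤ 1 := by
  calc marg μ π s ≤ ∑ ω, μ ω * 1 :=
        Finset.sum_le_sum fun ω _ => mul_le_mul_of_nonneg_left (pi_le_one hπ ω s) (hμ.1 ω)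
    _ = 1 := by simp [hμ.2]

lemma vPost_eq {μ : Ω → ℝ} (π : Ω → S → ℝ) (v : A → Ω → ℝ) (a : A) (s : S) :
    vPost μ π v a s = (∑ ω, μ ω * π ω s * v a ω) / marg μ π s := by
  unfold vPost post
  simp only [div_mul_eq_mul_div]
  rw [← Finset.sum_div]

lemma vPost_sub {μ : Ω → ℝ} (π : Ω → S → ℝ) (v : A → Ω → ℝ) (a b : A) (s : S) :
    vPost μ π v a s - vPost μ π v b s = numv μ π v s a b / marg μ π s := by
  rw [vPost_eq, vPost_eq, div_sub_div_same]
  congr 1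
  rw [numv, ← Finset.sum_sub_distrib]
  exact Finset.sum_congr rfl fun ω _ => by ring

lemma br_iff {μ : Ω → ℝ} {π : Ω → S → ℝ} {v : A → Ω → ℝ} {γ : ℝ} {a : A} {s : S}
    (hm : 0 < marg μ π s) :
    IsBR μ π v γ a s ↔ ∀ b, numv μ π v s b a ≤ γ * marg μ π s := by
  unfold IsBR
  have key : ∀ b : A, vPost μ π v b s - vPost μ π v a s = numv μ π v s b a / marg μ π s :=
    fun b => vPost_sub π v b a s
  constructor
  · intro h b
    have hb := h b
    have : numv μ π v s b a / marg μ π s ≤ γ := by rw [← key b]; linarith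
    calc numv μ π v s b a = numv μ π v s b a / marg μ π s * marg μ π s := by
          field_simp
      _ ≤ γ * marg μ π s := mul_le_mul_of_nonneg_right this hm.le
  · intro h b
    have hb := h b
    have : numv μ π v s b a / marg μ π s ≤ γ := (div_le_iff₀ hm).2 (by linarith)
    rw [← key b] at this
    linarith

lemma numv_swap (μ : Ω → ℝ) (π : Ω → S → ℝ) (v : A → Ω → ℝ) (s : S) (a b : A) :
    numv μ π v s a b = - numv μ π v s b a := by
  rw [numv, numv, ← Finset.sum_neg_distrib]
  exact Finset.sum_congr rfl fun ω _ => by ring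

end Helpers
set_option linter.unusedSectionVars false

section Helpers2

variable {Ω S A : Type*} [Fintype Ω] [Fintype S] [Fintype A]

lemma inner_nonneg {ρ : S → A → ℝ} {u : A → Ω → ℝ} (hρ : IsDist ρ)
    (hu : ∀ a ω, 0 ≤ u a ω ∧ u a ω ≤ 1) (s : S) (ω : Ω) :
    0 ≤ ∑ a, ρ s a * u a ω :=
  Finset.sum_nonneg fun a _ => mul_nonneg (hρ.1 s a) (hu a ω).1

lemma inner_le_one {ρ : S → A → ℝ} {u : A → Ω → ℝ} (hρ : IsDist ρ)
    (hu : ∀ a ω, 0 ≤ u a ω ∧ u a ω ≤ 1) (s : S) (ω : Ω) :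
    ∑ a, ρ s a * u a ω ≤ 1 := by
  calc ∑ a, ρ s a * u a ω ≤ ∑ a, ρ s a :=
        Finset.sum_le_sum fun a _ => mul_le_of_le_one_right (hρ.1 s a) (hu a ω).2
    _ = 1 := hρ.2 s

lemma senderU_nonneg {μ : Ω → ℝ} {π : Ω → S → ℝ} {u : A → Ω → ℝ} {ρ : S → A → ℝ}
    (hμ : IsProb μ) (hπ : IsDist π) (hρ : IsDist ρ) (hu : ∀ a ω, 0 ≤ u a ω ∧ u a ω ≤ 1) :
    0 ≤ senderU μ π u ρ :=
  Finset.sum_nonneg fun ω _ => Finset.sum_nonneg fun s _ =>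
    mul_nonneg (mul_nonneg (hμ.1 ω) (hπ.1 ω s)) (inner_nonneg hρ hu s ω)

lemma senderU_le_one {μ : Ω → ℝ} {π : Ω → S → ℝ} {u : A → Ω → ℝ} {ρ : S → A → ℝ}
    (hμ : IsProb μ) (hπ : IsDist π) (hρ : IsDist ρ) (hu : ∀ a ω, 0 ≤ u a ω ∧ u a ω ≤ 1) :
    senderU μ π u ρ ≤ 1 := by
  calc senderU μ π u ρ ≤ ∑ ω, ∑ s, μ ω * π ω s := by
        refine Finset.sum_le_sum fun ω _ => Finset.sum_le_sum fun s _ => ?_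
        calc μ ω * π ω s * ∑ a, ρ s a * u a ω ≤ μ ω * π ω s * 1 :=
              mul_le_mul_of_nonneg_left (inner_le_one hρ hu s ω)
                (mul_nonneg (hμ.1 ω) (hπ.1 ω s))
          _ = μ ω * π ω s := mul_one _
    _ = 1 := by
        simp only [← Finset.mul_sum]
        simp only [hπ.2, mul_one, hμ.2]

lemma obedient_isDist : IsDist (obedient (A := A)) := by
  constructor
  · intro s a; unfold obedient; positivity
  · intro s; simp [obedient]

lemma sum_obedient (u : A → Ω → ℝ) (s : A) (ω : Ω) :
    ∑ a, obedient s a * u a ω = u s ω := by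
  simp [obedient, ite_mul]

lemma compose_isDist {π : Ω → S → ℝ} {ρ : S → A → ℝ} (hπ : IsDist π) (hρ : IsDist ρ) :
    IsDist (compose π ρ) := by
  constructor
  · intro ω a
    exact Finset.sum_nonneg fun s _ => mul_nonneg (hπ.1 ω s) (hρ.1 s a)
  · intro ω
    unfold compose
    rw [Finset.sum_comm]
    simp only [← Finset.mul_sum, hρ.2, mul_one]
    exact hπ.2 ω

lemma senderU_compose (μ : Ω → ℝ) (π : Ω → S → ℝ) (u : A → Ω → ℝ) (ρ : S → A → ℝ) :
    senderU μ (compose π ρ) u obedient = senderU μ π u ρ := by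
  unfold senderU compose
  refine Finset.sum_congr rfl fun ω _ => ?_
  simp only [sum_obedient, Finset.mul_sum, Finset.sum_mul]
  rw [Finset.sum_comm]
  exact Finset.sum_congr rfl fun s _ => Finset.sum_congr rfl fun t _ => by ring

lemma marg_compose (μ : Ω → ℝ) (π : Ω → S → ℝ) (ρ : S → A → ℝ) (a : A) :
    marg μ (compose π ρ) a = ∑ s, ρ s a * marg μ π s := by
  unfold marg compose
  simp only [Finset.mul_sum]
  rw [Finset.sum_comm]
  exact Finset.sum_congr rfl fun s _ => Finset.sum_congr rfl fun ω _ => by ring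

lemma numv_compose (μ : Ω → ℝ) (π : Ω → S → ℝ) (ρ : S → A → ℝ) (v : A → Ω → ℝ)
    (c a b : A) :
    numv μ (compose π ρ) v c a b = ∑ s, ρ s c * numv μ π v s a b := by
  unfold numv compose
  simp only [Finset.mul_sum, Finset.sum_mul]
  rw [Finset.sum_comm]
  exact Finset.sum_congr rfl fun s _ => Finset.sum_congr rfl fun ω _ => by ring

end Helpers2
set_option linter.unusedSectionVars false

section Helpers3

variable {Ω A : Type*} [Fintype Ω] [Fintype A]

lemma robustify_isDist {π : Ω → A → ℝ} (hπ : IsDist π) (aOf : Ω → A) {α : ℝ}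
    (h0 : 0 ≤ α) (h1 : α ≤ 1) : IsDist (robustify π aOf α) := by
  constructor
  · intro ω s
    unfold robustify
    have h2 : (0:ℝ) ≤ if s = aOf ω then α else 0 := by split <;> simp [h0]
    have := hπ.1 ω s
    nlinarith
  · intro ω
    unfold robustify
    rw [Finset.sum_add_distrib]
    simp only [← Finset.mul_sum, hπ.2, mul_one]
    rw [Finset.sum_ite_eq' Finset.univ (aOf ω) (fun _ => α)]
    simp

lemma numv_robustify (μ : Ω → ℝ) (π : Ω → A → ℝ) (aOf : Ω → A) (α : ℝ) (v : A → Ω → ℝ)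
    (s a b : A) :
    numv μ (robustify π aOf α) v s a b = (1 - α) * numv μ π v s a b
      + α * ∑ ω ∈ Finset.univ.filter (fun ω => aOf ω = s), μ ω * (v a ω - v b ω) := by
  unfold numv robustify
  rw [Finset.mul_sum, Finset.mul_sum, Finset.sum_filter, ← Finset.sum_add_distrib]
  refine Finset.sum_congr rfl fun ω _ => ?_
  rcases eq_or_ne (aOf ω) s with h | h
  · rw [if_pos h.symm, if_pos h]; ring
  · rw [if_neg (fun c => h c.symm), if_neg h]; ring

lemma senderU_robustify (μ : Ω → ℝ) (π : Ω → A → ℝ) (aOf : Ω → A) (α : ℝ) (u : A → Ω → ℝ)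
    (ρ : A → A → ℝ) :
    senderU μ (robustify π aOf α) u ρ = (1 - α) * senderU μ π u ρ
      + α * ∑ ω, μ ω * ∑ a, ρ (aOf ω) a * u a ω := by
  unfold senderU robustify
  rw [Finset.mul_sum, Finset.mul_sum, ← Finset.sum_add_distrib]
  refine Finset.sum_congr rfl fun ω _ => ?_
  have key : ∀ s, μ ω * ((1-α) * π ω s + if s = aOf ω then α else 0) * (∑ a, ρ s a * u a ω)
      = (1-α) * (μ ω * π ω s * ∑ a, ρ s a * u a ω)
        + (if s = aOf ω then α * (μ ω * ∑ a, ρ s a * u a ω) else 0) := by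
    intro s; split <;> ring
  simp only [key]
  rw [Finset.sum_add_distrib,
    Finset.sum_ite_eq' Finset.univ (aOf ω) (fun s => α * (μ ω * ∑ a, ρ s a * u a ω)),
    ← Finset.mul_sum]
  simp

lemma minPrior_pos {Ω : Type*} [Fintype Ω] [Nonempty Ω] {μ : Ω → ℝ} (h : ∀ ω, 0 < μ ω) :
    0 < minPrior μ := by
  rw [minPrior, Finset.lt_inf'_iff]
  exact fun ω _ => h ω

lemma minPrior_le {Ω : Type*} [Fintype Ω] [Nonempty Ω] (μ : Ω → ℝ) (ω : Ω) :
    minPrior μ ≤ μ ω :=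
  Finset.inf'_le _ (Finset.mem_univ ω)

end Helpers3
set_option linter.unusedSectionVars false

section Helpers4

variable {Ω S A : Type*} [Fintype Ω] [Fintype S] [Fintype A]

/-- If `ρ` is supported on `γ`-best-responding actions, then in the composed direct scheme
every recommendation is `γ`-best-responding (numerator form). -/
lemma compose_num_le {μ : Ω → ℝ} {π : Ω → S → ℝ} {ρ : S → A → ℝ} {v : A → Ω → ℝ} {γ : ℝ}
    (hμ : IsProb μ) (hπ : IsDist π) (hρ : IsDist ρ)
    (hsupp : ∀ s a, 0 < marg μ π s → ρ s a ≠ 0 → IsBR μ π v γ a s) :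
    ∀ a b, numv μ (compose π ρ) v a b a ≤ γ * marg μ (compose π ρ) a := by
  intro a b
  rw [numv_compose, marg_compose, Finset.mul_sum]
  refine Finset.sum_le_sum fun s _ => ?_
  rcases (marg_nonneg hμ hπ s).lt_or_eq with hm | hm
  · rcases eq_or_ne (ρ s a) 0 with h0 | h0
    · simp [h0]
    · have hBR := hsupp s a hm h0
      have := (br_iff hm).1 hBR b
      calc ρ s a * numv μ π v s b a ≤ ρ s a * (γ * marg μ π s) :=
            mul_le_mul_of_nonneg_left this (hρ.1 s a)
        _ = γ * (ρ s a * marg μ π s) := by ring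
  · have hz : numv μ π v s b a = 0 := by
      refine Finset.sum_eq_zero fun ω _ => ?_
      rw [joint_eq_zero hμ hπ hm.symm ω]; ring
    rw [hz, ← hm]
    simp

/-- Robustification makes every recommendation strictly dominant by margin
`t·μ_min·Δ - g` over any alternative. -/
lemma robustify_num_ge {μ : Ω → ℝ} {π : Ω → A → ℝ} {v : A → Ω → ℝ} {aOf : Ω → A}
    {Δ g t : ℝ} [Nonempty Ω]
    (hμ : IsProb μ) (hμpos : ∀ ω, 0 < μ ω) (hπ : IsDist π)
    (hΔpos : 0 < Δ) (hΔ : ∀ ω a, a ≠ aOf ω → Δ ≤ v (aOf ω) ω - v a ω)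
    (hOnto : ∀ a, ∃ ω, aOf ω = a)
    (hg : 0 ≤ g) (ht0 : 0 ≤ t) (ht1 : t ≤ 1)
    (hnum : ∀ a b, numv μ π v a b a ≤ g * marg μ π a) :
    ∀ a b, b ≠ a → -g + t * (minPrior μ * Δ) ≤ numv μ (robustify π aOf t) v a a b := by
  intro a b hb
  rw [numv_robustify]
  have h1 : -g ≤ (1 - t) * numv μ π v a a b := by
    have h2 : -(g * marg μ π a) ≤ numv μ π v a a b := by
      have := hnum a b
      rw [numv_swap] at this
      linarith
    have hm0 : 0 ≤ marg μ π a := marg_nonneg hμ hπ a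
    have hm1 : marg μ π a ≤ 1 := marg_le_one hμ hπ a
    have h3 : (1 - t) * (-(g * marg μ π a)) ≤ (1 - t) * numv μ π v a a b :=
      mul_le_mul_of_nonneg_left h2 (by linarith)
    have h4 : (1 - t) * marg μ π a ≤ 1 := by nlinarith
    have h5 : 0 ≤ g * (1 - (1 - t) * marg μ π a) := mul_nonneg hg (by linarith)
    nlinarith
  have h2 : minPrior μ * Δ ≤ ∑ ω ∈ Finset.univ.filter (fun ω => aOf ω = a),
      μ ω * (v a ω - v b ω) := by
    obtain ⟨ω₀, hω₀⟩ := hOnto a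
    have hmem : ω₀ ∈ Finset.univ.filter (fun ω => aOf ω = a) := by
      simp [hω₀]
    have hterm : ∀ ω ∈ Finset.univ.filter (fun ω => aOf ω = a),
        minPrior μ * Δ ≤ μ ω * (v a ω - v b ω) := by
      intro ω hω
      have haω : aOf ω = a := by simpa using hω
      have hΔω : Δ ≤ v a ω - v b ω := by
        have := hΔ ω b (haω ▸ hb)
        rwa [haω] at this
      exact mul_le_mul (minPrior_le μ ω) hΔω hΔpos.le (hμpos ω).le
    calc minPrior μ * Δ ≤ μ ω₀ * (v a ω₀ - v b ω₀) := hterm ω₀ hmem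
      _ ≤ ∑ ω ∈ Finset.univ.filter (fun ω => aOf ω = a), μ ω * (v a ω - v b ω) := by
          refine Finset.single_le_sum (f := fun ω => μ ω * (v a ω - v b ω)) (fun ω hω => ?_) hmem
          have := hterm ω hω
          have hmp : 0 < minPrior μ * Δ := mul_pos (minPrior_pos hμpos) hΔpos
          show 0 ≤ μ ω * (v a ω - v b ω)
          linarith
  nlinarith

end Helpers4
set_option linter.unusedSectionVars false

section Helpers5

variable {Ω S A : Type*} [Fintype Ω] [Fintype S] [Fintype A]

lemma sum_joint {μ : Ω → ℝ} {π : Ω → S → ℝ} (hμ : IsProb μ) (hπ : IsDist π) :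
    ∑ ω, ∑ s, μ ω * π ω s = 1 := by
  simp only [← Finset.mul_sum]
  simp only [hπ.2, mul_one, hμ.2]

lemma senderU_obedient_le {μ : Ω → ℝ} {π : Ω → A → ℝ} {u : A → Ω → ℝ} {ρ : A → A → ℝ} {δ : ℝ}
    (hμ : IsProb μ) (hπ : IsDist π) (hρ : IsDist ρ) (hu : ∀ a ω, 0 ≤ u a ω ∧ u a ω ≤ 1)
    (h : ∀ s, 0 < marg μ π s → 1 - δ ≤ ρ s s) :
    (1 - δ) * senderU μ π u obedient ≤ senderU μ π u ρ := by
  unfold senderU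
  rw [Finset.mul_sum]
  refine Finset.sum_le_sum fun ω _ => ?_
  rw [Finset.mul_sum]
  refine Finset.sum_le_sum fun s _ => ?_
  rcases (marg_nonneg hμ hπ s).lt_or_eq with hm | hm
  · rw [sum_obedient]
    have h1 : (1 - δ) * u s ω ≤ ρ s s * u s ω := mul_le_mul_of_nonneg_right (h s hm) (hu s ω).1
    have h2 : ρ s s * u s ω ≤ ∑ a, ρ s a * u a ω :=
      Finset.single_le_sum (f := fun a => ρ s a * u a ω)
        (fun a _ => mul_nonneg (hρ.1 s a) (hu a ω).1) (Finset.mem_univ s)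
    have hj : 0 ≤ μ ω * π ω s := mul_nonneg (hμ.1 ω) (hπ.1 ω s)
    calc (1 - δ) * (μ ω * π ω s * u s ω) = μ ω * π ω s * ((1 - δ) * u s ω) := by ring
      _ ≤ μ ω * π ω s * ∑ a, ρ s a * u a ω := mul_le_mul_of_nonneg_left (le_trans h1 h2) hj
  · have hz := joint_eq_zero hμ hπ hm.symm ω
    rw [hz]
    simp

end Helpers5
set_option linter.unusedSectionVars false

section HelpersHat

variable {Ω S A : Type*} [Fintype Ω] [Fintype S] [Fintype A]

/-- Total probability that `ρ` puts on `γ`-best-responding actions at signal `s`. -/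
def hatZ (μ : Ω → ℝ) (π : Ω → S → ℝ) (v : A → Ω → ℝ) (γ : ℝ) (ρ : S → A → ℝ) (s : S) : ℝ :=
  ∑ b ∈ Finset.univ.filter (fun b => IsBR μ π v γ b s), ρ s b

/-- The strategy `ρ` with all non-`γ`-best-responding mass moved to `astar s`. -/
def hatStrat (μ : Ω → ℝ) (π : Ω → S → ℝ) (v : A → Ω → ℝ) (γ : ℝ) (ρ : S → A → ℝ)
    (astar : S → A) : S → A → ℝ :=
  fun s a => (if IsBR μ π v γ a s then ρ s a else 0) +
    (if a = astar s then 1 - hatZ μ π v γ ρ s else 0)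

variable {μ : Ω → ℝ} {π : Ω → S → ℝ} {v : A → Ω → ℝ} {γ : ℝ} {ρ : S → A → ℝ} {astar : S → A}

lemma hatZ_nonneg (hρ : IsDist ρ) (s : S) : 0 ≤ hatZ μ π v γ ρ s :=
  Finset.sum_nonneg fun a _ => hρ.1 s a

lemma hatZ_le_one (hρ : IsDist ρ) (s : S) : hatZ μ π v γ ρ s ≤ 1 := by
  calc hatZ μ π v γ ρ s ≤ ∑ a, ρ s a := Finset.sum_le_sum_of_subset_of_nonneg
        (Finset.filter_subset _ _) (fun b _ _ => hρ.1 s b)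
    _ = 1 := hρ.2 s

lemma hat_ite1 (hρ : IsDist ρ) (s : S) (a : A) :
    (0:ℝ) ≤ if IsBR μ π v γ a s then ρ s a else 0 := by
  split; exacts [hρ.1 s a, le_rfl]

lemma hat_ite2 (hρ : IsDist ρ) (s : S) (a : A) :
    (0:ℝ) ≤ if a = astar s then 1 - hatZ μ π v γ ρ s else 0 := by
  split
  · linarith [hatZ_le_one (μ := μ) (π := π) (v := v) (γ := γ) hρ s]
  · exact le_rfl

lemma hat_isDist (hρ : IsDist ρ) : IsDist (hatStrat μ π v γ ρ astar) := by
  constructor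
  · intro s a
    have h1 := hat_ite1 (μ := μ) (π := π) (v := v) (γ := γ) hρ s a
    have h2 := hat_ite2 (μ := μ) (π := π) (v := v) (γ := γ) (astar := astar) hρ s a
    unfold hatStrat
    linarith
  · intro s
    unfold hatStrat
    rw [Finset.sum_add_distrib,
      Finset.sum_ite_eq' Finset.univ (astar s) (fun _ => 1 - hatZ μ π v γ ρ s),
      ← Finset.sum_filter]
    simp [hatZ]

lemma hat_supp (hastar : ∀ s, IsBR μ π v γ (astar s) s) :
    ∀ s a, hatStrat μ π v γ ρ astar s a ≠ 0 → IsBR μ π v γ a s := by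
  intro s a hne0
  by_contra hn
  apply hne0
  have hna : a ≠ astar s := fun h => hn (h ▸ hastar s)
  unfold hatStrat
  rw [if_neg hn, if_neg hna, add_zero]

lemma hat_senderU {u : A → Ω → ℝ} {δ : ℝ}
    (hμ : IsProb μ) (hπ : IsDist π) (hρ : IsDist ρ) (hu : ∀ a ω, 0 ≤ u a ω ∧ u a ω ≤ 1)
    (hapx : IsApproxBRStrategy μ π v γ δ ρ) :
    senderU μ π u ρ ≤ senderU μ π u (hatStrat μ π v γ ρ astar) + δ := by
  have hinner : ∀ ω s, 0 < marg μ π s →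
      ∑ a, ρ s a * u a ω ≤ (∑ a, hatStrat μ π v γ ρ astar s a * u a ω) + δ := by
    intro ω s hm
    have hsplit : ∑ a, ρ s a * u a ω
        = (∑ a ∈ Finset.univ.filter (fun a => IsBR μ π v γ a s), ρ s a * u a ω)
          + ∑ a ∈ Finset.univ.filter (fun a => ¬ IsBR μ π v γ a s), ρ s a * u a ω :=
      (Finset.sum_filter_add_sum_filter_not _ _ _).symm
    have hZsplit : hatZ μ π v γ ρ s
        + ∑ a ∈ Finset.univ.filter (fun a => ¬ IsBR μ π v γ a s), ρ s a = 1 := by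
      rw [hatZ, Finset.sum_filter_add_sum_filter_not]
      exact hρ.2 s
    have h3 : ∑ a ∈ Finset.univ.filter (fun a => ¬ IsBR μ π v γ a s), ρ s a * u a ω
        ≤ ∑ a ∈ Finset.univ.filter (fun a => ¬ IsBR μ π v γ a s), ρ s a :=
      Finset.sum_le_sum fun a _ => mul_le_of_le_one_right (hρ.1 s a) (hu a ω).2
    have h4 : 1 - δ ≤ hatZ μ π v γ ρ s := hapx s hm
    have h5 : ∑ a ∈ Finset.univ.filter (fun a => IsBR μ π v γ a s), ρ s a * u a ω
        ≤ ∑ a, hatStrat μ π v γ ρ astar s a * u a ω := by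
      rw [Finset.sum_filter]
      refine Finset.sum_le_sum fun a _ => ?_
      have hnn : 0 ≤ (if a = astar s then 1 - hatZ μ π v γ ρ s else 0) * u a ω :=
        mul_nonneg (hat_ite2 (μ := μ) (π := π) (v := v) (γ := γ) (astar := astar) hρ s a)
          (hu a ω).1
      unfold hatStrat
      rw [add_mul, ite_mul, zero_mul]
      exact le_add_of_nonneg_right hnn
    linarith
  have hδtot : senderU μ π u ρ
      ≤ ∑ ω, ∑ s, μ ω * π ω s * ((∑ a, hatStrat μ π v γ ρ astar s a * u a ω) + δ) := by
    refine Finset.sum_le_sum fun ω _ => Finset.sum_le_sum fun s _ => ?_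
    rcases (marg_nonneg hμ hπ s).lt_or_eq with hm | hm
    · exact mul_le_mul_of_nonneg_left (hinner ω s hm) (mul_nonneg (hμ.1 ω) (hπ.1 ω s))
    · rw [joint_eq_zero hμ hπ hm.symm ω]
      simp
  calc senderU μ π u ρ ≤ _ := hδtot
    _ = senderU μ π u (hatStrat μ π v γ ρ astar) + δ * ∑ ω, ∑ s, μ ω * π ω s := by
        unfold senderU
        simp only [mul_add, Finset.sum_add_distrib]
        congr 1
        rw [Finset.mul_sum]
        refine Finset.sum_congr rfl fun ω _ => ?_
        rw [Finset.mul_sum]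
        exact Finset.sum_congr rfl fun s _ => by ring
    _ = senderU μ π u (hatStrat μ π v γ ρ astar) + δ := by rw [sum_joint hμ hπ, mul_one]

end HelpersHat

universe uS

/-- Theorem 2.2: under Assumption A, with `μ_min = min_ω μ(ω) > 0` and
`γ/(μ_min·Δ) < 1` and `0 ≤ δ < 1`:
(i) for every `ε > 0` there is a direct-revelation scheme guaranteeing the sender at least
`OPT^BP(μ) - γ/(μ_min·Δ) - δ - ε` against every `(γ, δ)`-best-responding strategy; and
(ii) no scheme on any finite nonempty signal set can give the sender more than
`OPT^BP(μ) + γ/(μ_min·Δ) + δ` against any `(γ, δ)`-best-responding strategy. -/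
theorem bp_robustness
    {Ω A : Type*} [Fintype Ω] [Fintype A] [Nonempty Ω] [Nonempty A]
    (μ : Ω → ℝ) (hμ : IsProb μ) (hμpos : ∀ ω, 0 < μ ω)
    (v : A → Ω → ℝ) (hv : ∀ a ω, 0 ≤ v a ω ∧ v a ω ≤ 1)
    (u : A → Ω → ℝ) (hu : ∀ a ω, 0 ≤ u a ω ∧ u a ω ≤ 1)
    -- Assumption A: `aOf ω` is the unique optimal action at state `ω`, the optimality gap is
    -- at least `Δ > 0`, and every action is uniquely optimal at some state.
    (aOf : Ω → A) (hBest : ∀ ω a, a ≠ aOf ω → v a ω < v (aOf ω) ω)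
    (Δ : ℝ) (hΔpos : 0 < Δ) (hΔ : ∀ ω a, a ≠ aOf ω → Δ ≤ v (aOf ω) ω - v a ω)
    (hOnto : ∀ a, ∃ ω, aOf ω = a)
    (γ δ : ℝ) (hγ : 0 ≤ γ) (hγ1 : γ / (minPrior μ * Δ) < 1) (hδ0 : 0 ≤ δ) (hδ1 : δ < 1) :
    (∀ ε > 0, ∃ π : Ω → A → ℝ, IsDist π ∧
      ∀ ρ : A → A → ℝ, IsDist ρ → IsApproxBRStrategy μ π v γ δ ρ →
        OPTBP μ v u - γ / (minPrior μ * Δ) - δ - ε ≤ senderU μ π u ρ) ∧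
    (∀ (S : Type uS) [Fintype S] [Nonempty S] (π : Ω → S → ℝ), IsDist π →
      ∀ ρ : S → A → ℝ, IsDist ρ → IsApproxBRStrategy μ π v γ δ ρ →
        senderU μ π u ρ ≤ OPTBP μ v u + γ / (minPrior μ * Δ) + δ) := by
  classical
  have hmpΔ : 0 < minPrior μ * Δ := mul_pos (minPrior_pos hμpos) hΔpos
  set c : ℝ := γ / (minPrior μ * Δ) with hcdef
  have hc0 : 0 ≤ c := div_nonneg hγ hmpΔ.le
  have hc1 : c < 1 := hγ1
  have hγeq : c * (minPrior μ * Δ) = γ := by rw [hcdef]; exact div_mul_cancel₀ γ hmpΔ.ne'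
  clear_value c
  set Sopt : Set ℝ := {x | ∃ (π : Ω → A → ℝ) (ρ : A → A → ℝ), IsDist π ∧ IsDist ρ ∧
    IsBRStrategy μ π v 0 ρ ∧ x = senderU μ π u ρ} with hSopt
  have hOPT : OPTBP μ v u = sSup Sopt := rfl
  have hbdd : BddAbove Sopt := by
    refine ⟨1, fun x hx => ?_⟩
    obtain ⟨π', ρ', hπ', hρ', -, rfl⟩ := hx
    exact senderU_le_one hμ hπ' hρ' hu
  have hmemRev : senderU μ (fun ω a => if a = aOf ω then (1:ℝ) else 0) u obedient ∈ Sopt := by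
    have hrevd : IsDist (fun ω a => if a = aOf ω then (1:ℝ) else 0) := by
      constructor
      · intro ω a; dsimp only; split <;> norm_num
      · intro ω; simp
    refine ⟨_, obedient, hrevd, obedient_isDist, ?_, rfl⟩
    intro s hm a hn
    rcases eq_or_ne a s with rfl | has
    · exfalso
      apply hn
      rw [br_iff hm]
      intro b
      rw [zero_mul]
      refine Finset.sum_nonpos fun ω _ => ?_
      dsimp only
      rcases eq_or_ne a (aOf ω) with ha | ha
      · rw [if_pos ha]
        have hvle : v b ω ≤ v a ω := by
          rcases eq_or_ne b a with rfl | hba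
          · exact le_rfl
          · have := hBest ω b (ha ▸ hba)
            rw [← ha] at this
            linarith
        nlinarith [(hμpos ω).le]
      · rw [if_neg ha]; simp
    · simp [obedient, has]
  have hne : Sopt.Nonempty := ⟨_, hmemRev⟩
  have hle_elem : ∀ x ∈ Sopt, x ≤ OPTBP μ v u := fun x hx => hOPT ▸ le_csSup hbdd hx
  constructor
  · -- Part (i)
    intro ε hε
    obtain ⟨x, hxmem, hx⟩ := exists_lt_of_lt_csSup hne
      (show OPTBP μ v u - ε / 2 < sSup Sopt by rw [← hOPT]; linarith)
    obtain ⟨π', ρ', hπ', hρ', hBR', rfl⟩ := hxmem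
    obtain ⟨α, hα0, hαc, hα1, hαε⟩ :
        ∃ α : ℝ, 0 ≤ α ∧ c < α ∧ α ≤ 1 ∧ α ≤ c + ε / 2 := by
      refine ⟨c + min (ε / 2) ((1 - c) / 2), ?_, ?_, ?_, ?_⟩
      · have := lt_min (show (0:ℝ) < ε / 2 by linarith) (show (0:ℝ) < (1 - c) / 2 by linarith)
        linarith
      · have := lt_min (show (0:ℝ) < ε / 2 by linarith) (show (0:ℝ) < (1 - c) / 2 by linarith)
        linarith
      · have := min_le_right (ε / 2) ((1 - c) / 2); linarith
      · have := min_le_left (ε / 2) ((1 - c) / 2); linarith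
    set π₁ := compose π' ρ' with hπ₁def
    have hπ₁d : IsDist π₁ := compose_isDist hπ' hρ'
    set π₂ := robustify π₁ aOf α with hπ₂def
    have hπ₂d : IsDist π₂ := robustify_isDist hπ₁d aOf hα0 hα1
    refine ⟨π₂, hπ₂d, ?_⟩
    intro ρ hρ hρapx
    have hnum1 : ∀ a b, numv μ π₁ v a b a ≤ 0 * marg μ π₁ a := by
      rw [hπ₁def]
      apply compose_num_le hμ hπ' hρ'
      intro s a hm hne0
      by_contra hn
      exact hne0 (hBR' s hm a hn)
    have hdom : ∀ a b, b ≠ a → γ < numv μ π₂ v a a b := by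
      intro a b hb
      have h := robustify_num_ge hμ hμpos hπ₁d hΔpos hΔ hOnto le_rfl hα0 hα1 hnum1 a b hb
      rw [← hπ₂def] at h
      have hlt : γ < α * (minPrior μ * Δ) := by
        calc γ = c * (minPrior μ * Δ) := hγeq.symm
          _ < α * (minPrior μ * Δ) := mul_lt_mul_of_pos_right hαc hmpΔ
      linarith
    have hρss : ∀ s, 0 < marg μ π₂ s → 1 - δ ≤ ρ s s := by
      intro s hm
      have happ := hρapx s hm
      have hsub : Finset.univ.filter (fun a => IsBR μ π₂ v γ a s) ⊆ {s} := by
        intro b hbmem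
        rw [Finset.mem_filter] at hbmem
        rw [Finset.mem_singleton]
        by_contra hbs
        have h1 := (br_iff hm).1 hbmem.2 s
        have h2 := hdom s b hbs
        have hmle := marg_le_one hμ hπ₂d s
        nlinarith
      have hss : ∑ a ∈ Finset.univ.filter (fun a => IsBR μ π₂ v γ a s), ρ s a
          ≤ ∑ a ∈ ({s} : Finset A), ρ s a :=
        Finset.sum_le_sum_of_subset_of_nonneg hsub (fun b _ _ => hρ.1 s b)
      rw [Finset.sum_singleton] at hss
      linarith
    have hkey := senderU_obedient_le hμ hπ₂d hρ hu hρss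
    have hX2 : senderU μ π₂ u obedient
        = (1 - α) * senderU μ π₁ u obedient + α * ∑ ω, μ ω * u (aOf ω) ω := by
      rw [hπ₂def, senderU_robustify]
      congr 2
      exact Finset.sum_congr rfl fun ω _ => by rw [sum_obedient]
    have hx1 : senderU μ π₁ u obedient = senderU μ π' u ρ' := senderU_compose μ π' u ρ'
    have hR0 : 0 ≤ ∑ ω, μ ω * u (aOf ω) ω :=
      Finset.sum_nonneg fun ω _ => mul_nonneg (hμ.1 ω) (hu _ ω).1
    have hX2le1 : senderU μ π₂ u obedient ≤ 1 := senderU_le_one hμ hπ₂d obedient_isDist hu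
    have hX1le1 : senderU μ π' u ρ' ≤ 1 := senderU_le_one hμ hπ' hρ' hu
    have c1 : senderU μ π' u ρ' - α ≤ senderU μ π₂ u obedient := by
      rw [hX2, hx1]
      nlinarith [mul_nonneg hα0 hR0, mul_le_mul_of_nonneg_left hX1le1 hα0]
    have c2 : senderU μ π₂ u obedient - δ ≤ (1 - δ) * senderU μ π₂ u obedient := by
      nlinarith [mul_le_mul_of_nonneg_left hX2le1 hδ0]
    linarith
  · -- Part (ii)
    intro S _ _ π hπ ρ hρ hapx
    have hastarF : ∀ s : S, ∃ a, IsBR μ π v γ a s := by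
      intro s
      obtain ⟨a, -, ha⟩ := Finset.exists_max_image Finset.univ
        (fun a => vPost μ π v a s) Finset.univ_nonempty
      refine ⟨a, fun b => ?_⟩
      have := ha b (Finset.mem_univ b)
      linarith
    choose astar hastar using hastarF
    set ρh : S → A → ℝ := hatStrat μ π v γ ρ astar with hρhdef
    have hρhd : IsDist ρh := hat_isDist hρ
    have hsupp : ∀ s a, 0 < marg μ π s → ρh s a ≠ 0 → IsBR μ π v γ a s :=
      fun s a _ h => hat_supp hastar s a h
    have hcomp : senderU μ π u ρ ≤ senderU μ π u ρh + δ := hat_senderU hμ hπ hρ hu hapx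
    set π₁ := compose π ρh with hπ₁def
    have hπ₁d : IsDist π₁ := compose_isDist hπ hρhd
    have hnum1 : ∀ a b, numv μ π₁ v a b a ≤ γ * marg μ π₁ a := by
      rw [hπ₁def]
      exact compose_num_le hμ hπ hρhd hsupp
    set π₂ := robustify π₁ aOf c with hπ₂def
    have hπ₂d : IsDist π₂ := robustify_isDist hπ₁d aOf hc0 hc1.le
    have hdom : ∀ a b, b ≠ a → 0 ≤ numv μ π₂ v a a b := by
      intro a b hb
      have h := robustify_num_ge hμ hμpos hπ₁d hΔpos hΔ hOnto hγ hc0 hc1.le hnum1 a b hb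
      rw [← hπ₂def] at h
      linarith [hγeq]
    have hBRself : ∀ s, 0 < marg μ π₂ s → IsBR μ π₂ v 0 s s := by
      intro s hm
      rw [br_iff hm]
      intro b
      rw [zero_mul, numv_swap]
      rcases eq_or_ne b s with rfl | hbs
      · have : numv μ π₂ v b b b = 0 := by
          rw [numv]; simp
        rw [this]; simp
      · have := hdom s b hbs; linarith
    have hBRstrat : IsBRStrategy μ π₂ v 0 obedient := by
      intro s hm a hn
      rcases eq_or_ne a s with rfl | has
      · exact absurd (hBRself a hm) hn
      · simp [obedient, has]
    have hmem2 : senderU μ π₂ u obedient ∈ Sopt :=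
      ⟨π₂, obedient, hπ₂d, obedient_isDist, hBRstrat, rfl⟩
    have hOPTge : senderU μ π₂ u obedient ≤ OPTBP μ v u := hle_elem _ hmem2
    have hX2 : senderU μ π₂ u obedient
        = (1 - c) * senderU μ π₁ u obedient + c * ∑ ω, μ ω * u (aOf ω) ω := by
      rw [hπ₂def, senderU_robustify]
      congr 2
      exact Finset.sum_congr rfl fun ω _ => by rw [sum_obedient]
    have hx1 : senderU μ π₁ u obedient = senderU μ π u ρh := senderU_compose μ π u ρh
    have hR0 : 0 ≤ ∑ ω, μ ω * u (aOf ω) ω :=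
      Finset.sum_nonneg fun ω _ => mul_nonneg (hμ.1 ω) (hu _ ω).1
    have hX1le1 : senderU μ π u ρh ≤ 1 := senderU_le_one hμ hπ hρhd hu
    have c1 : senderU μ π u ρh - c ≤ senderU μ π₂ u obedient := by
      rw [hX2, hx1]
      nlinarith [mul_nonneg hc0 hR0, mul_le_mul_of_nonneg_left hX1le1 hc0]
    linarith
end
end

section
/- Assume Assumption A holds and μ(ω) > 0 for all ω. Let π be a direct-revelation scheme, α ∈ [0,1], and let π' be the α-robustification of π. Then for every signal s ∈ A with π(s) > 0, one has π'(s) > 0 and the advantage under π' satisfies adv_{π'}(s) ≥ (1−α)·(π(s)/π'(s))·adv_π(s) + α·(μ(Ω_s)/π'(s))·Δ. -/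
open Finset
open scoped BigOperators Classical

noncomputable section

/-- Lemma 2.6, second item: under Assumption A with a fully supported prior,
for every signal `s` with `π(s) > 0`, the `α`-robustification `π'` of `π` satisfies `π'(s) > 0`
and `adv_{π'}(s) ≥ (1 - α)·(π(s)/π'(s))·adv_π(s) + α·(μ(Ω_s)/π'(s))·Δ`.
(The advantage `adv_π(s)` is the minimum of `advTerm μ π v s a` over deviations `a ≠ s`; the
inequality between the minima is expressed via an arbitrary lower bound `b` on the terms of
`adv_π(s)`.) -/
theorem robustify_advantage
    {Ω A : Type*} [Fintype Ω] [Fintype A] [Nonempty Ω] [Nonempty A]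
    (μ : Ω → ℝ) (hμ : IsProb μ) (hμpos : ∀ ω, 0 < μ ω)
    (v : A → Ω → ℝ) (hv : ∀ a ω, 0 ≤ v a ω ∧ v a ω ≤ 1)
    -- Assumption A
    (aOf : Ω → A) (hBest : ∀ ω a, a ≠ aOf ω → v a ω < v (aOf ω) ω)
    (Δ : ℝ) (hΔpos : 0 < Δ) (hΔ : ∀ ω a, a ≠ aOf ω → Δ ≤ v (aOf ω) ω - v a ω)
    (hOnto : ∀ a, ∃ ω, aOf ω = a)
    (π : Ω → A → ℝ) (hπ : IsDist π) (α : ℝ) (hα0 : 0 ≤ α) (hα1 : α ≤ 1)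
    (s : A) (hs : 0 < marg μ π s) :
    0 < marg μ (robustify π aOf α) s ∧
    ∀ b : ℝ, (∀ a, a ≠ s → b ≤ advTerm μ π v s a) →
      ∀ a, a ≠ s →
        (1 - α) * (marg μ π s / marg μ (robustify π aOf α) s) * b
            + α * (massOf μ aOf s / marg μ (robustify π aOf α) s) * Δ
          ≤ advTerm μ (robustify π aOf α) v s a := by
  set m := marg μ π s with hm
  set M := massOf μ aOf s with hMdef
  -- mass is positive
  have hMpos : 0 < M := by
    obtain ⟨ω0, hω0⟩ := hOnto s
    refine Finset.sum_pos (fun ω _ => hμpos ω) ⟨ω0, ?_⟩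
    simp [hω0]
  -- marginal of robustified scheme
  have hmarg : marg μ (robustify π aOf α) s = (1 - α) * m + α * M := by
    simp only [hm, hMdef, marg, robustify, massOf, mul_add, Finset.sum_add_distrib,
      Finset.mul_sum, Finset.sum_filter, mul_ite, mul_zero]
    congr 1
    · apply Finset.sum_congr rfl; intro ω _; ring
    · apply Finset.sum_congr rfl; intro ω _
      by_cases h : aOf ω = s
      · simp [h, mul_comm]
      · simp [h, Ne.symm h]
  have hm' : 0 < marg μ (robustify π aOf α) s := by
    rw [hmarg]
    rcases lt_or_eq_of_le hα1 with h | h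
    · have : 0 < (1 - α) * m := mul_pos (by linarith) hs
      nlinarith [mul_nonneg hα0 hMpos.le]
    · subst h; simpa using hMpos
  refine ⟨hm', ?_⟩
  intro b hb a ha
  set m' := marg μ (robustify π aOf α) s with hm'def
  -- rewrite advTerm as sum over joint / m'
  have hadv' : advTerm μ (robustify π aOf α) v s a
      = (∑ ω, μ ω * robustify π aOf α ω s * (v s ω - v a ω)) / m' := by
    rw [advTerm, Finset.sum_div]
    apply Finset.sum_congr rfl
    intro ω _
    rw [post]
    ring
  have hadvπ : advTerm μ π v s a = (∑ ω, μ ω * π ω s * (v s ω - v a ω)) / m := by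
    rw [advTerm, Finset.sum_div]
    apply Finset.sum_congr rfl
    intro ω _
    rw [post]
    ring
  set T := ∑ ω, μ ω * π ω s * (v s ω - v a ω) with hT
  have hTb : m * b ≤ T := by
    have := hb a ha
    rw [hadvπ, le_div_iff₀ hs] at this
    linarith [this]
  -- split the robustified sum
  have hsplit : (∑ ω, μ ω * robustify π aOf α ω s * (v s ω - v a ω))
      = (1 - α) * T + α * ∑ ω ∈ Finset.univ.filter (fun ω => aOf ω = s),
          μ ω * (v s ω - v a ω) := by
    simp only [robustify, hT, Finset.mul_sum, Finset.sum_filter, mul_ite, mul_zero]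
    rw [← Finset.sum_add_distrib]
    apply Finset.sum_congr rfl
    intro ω _
    by_cases h : aOf ω = s
    · simp only [h, if_pos rfl, if_true]; ring
    · simp only [h, if_neg (Ne.symm h), if_neg h, if_false]; ring
  have hW : M * Δ ≤ ∑ ω ∈ Finset.univ.filter (fun ω => aOf ω = s),
      μ ω * (v s ω - v a ω) := by
    rw [hMdef, massOf, Finset.sum_mul]
    apply Finset.sum_le_sum
    intro ω hω
    have hωs : aOf ω = s := (Finset.mem_filter.mp hω).2
    have := hΔ ω a (by rw [hωs]; exact ha)
    rw [hωs] at this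
    exact mul_le_mul_of_nonneg_left this (hμpos ω).le
  rw [hadv', hsplit, le_div_iff₀ hm']
  have h1α : 0 ≤ 1 - α := by linarith
  have hgoal : (1 - α) * (m / m') * b * m' + α * (M / m') * Δ * m'
      = (1 - α) * m * b + α * M * Δ := by
    field_simp
  rw [add_mul, hgoal]
  nlinarith [mul_le_mul_of_nonneg_left hTb h1α, mul_le_mul_of_nonneg_left hW hα0]
end
end

section
/- Assume Assumption A holds and μ(ω) > 0 for every ω (write μ_min = min_ω μ(ω)). Let π be a direct-revelation scheme such that adv_π(s) ≥ 0 for every s ∈ A with π(s) > 0, let α ∈ (0,1], and let π' be the α-robustification of π. Then for every s ∈ A one has π'(s) > 0 and adv_{π'}(s) ≥ α·μ_min·Δ. -/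
open Finset
open scoped BigOperators Classical

noncomputable section

/-- under Assumption A with a fully supported prior, if `π` is a
direct-revelation scheme with `adv_π(s) ≥ 0` on all sent signals, then its `α`-robustification
`π'` (with `0 < α ≤ 1`) has `π'(s) > 0` and `adv_{π'}(s) ≥ α·μ_min·Δ` for every signal `s`.
(`adv_{π'}(s) ≥ c` is expressed as `c ≤ advTerm` for every deviation `a ≠ s`.) -/
theorem robustified_advantage_positive
    {Ω A : Type*} [Fintype Ω] [Fintype A] [Nonempty Ω] [Nonempty A]
    (μ : Ω → ℝ) (hμ : IsProb μ) (hμpos : ∀ ω, 0 < μ ω)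
    (v : A → Ω → ℝ) (hv : ∀ a ω, 0 ≤ v a ω ∧ v a ω ≤ 1)
    -- Assumption A
    (aOf : Ω → A) (hBest : ∀ ω a, a ≠ aOf ω → v a ω < v (aOf ω) ω)
    (Δ : ℝ) (hΔpos : 0 < Δ) (hΔ : ∀ ω a, a ≠ aOf ω → Δ ≤ v (aOf ω) ω - v a ω)
    (hOnto : ∀ a, ∃ ω, aOf ω = a)
    (π : Ω → A → ℝ) (hπ : IsDist π)
    (hadv : ∀ s, 0 < marg μ π s → ∀ a, a ≠ s → 0 ≤ advTerm μ π v s a)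
    (α : ℝ) (hα0 : 0 < α) (hα1 : α ≤ 1) :
    ∀ s : A, 0 < marg μ (robustify π aOf α) s ∧
      ∀ a, a ≠ s → α * minPrior μ * Δ ≤ advTerm μ (robustify π aOf α) v s a := by
  intro s
  obtain ⟨ω₀, hω₀⟩ := hOnto s
  set π' := robustify π aOf α with hπ'def
  have hπ'nonneg : ∀ ω t, 0 ≤ π' ω t := by
    intro ω t
    have h1 : (0:ℝ) ≤ 1 - α := by linarith
    have h2 := hπ.1 ω t
    have h3 : (0:ℝ) ≤ (if t = aOf ω then α else 0) := by
      split <;> linarith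
    simp only [hπ'def, robustify]
    have := mul_nonneg h1 h2
    linarith
  have hπ'sum : ∀ ω, ∑ t, π' ω t = 1 := by
    intro ω
    simp only [hπ'def, robustify]
    rw [Finset.sum_add_distrib, ← Finset.mul_sum, hπ.2 ω, Finset.sum_ite_eq' Finset.univ (aOf ω) (fun _ => α)]
    simp
  have hπ'le1 : ∀ ω t, π' ω t ≤ 1 := by
    intro ω t
    calc π' ω t ≤ ∑ t', π' ω t' :=
          Finset.single_le_sum (fun t' _ => hπ'nonneg ω t') (Finset.mem_univ t)
      _ = 1 := hπ'sum ω
  -- marginal positivity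
  have hmpos : 0 < marg μ π' s := by
    apply Finset.sum_pos' (fun ω _ => mul_nonneg (hμpos ω).le (hπ'nonneg ω s))
    refine ⟨ω₀, Finset.mem_univ _, ?_⟩
    have : π' ω₀ s = (1 - α) * π ω₀ s + α := by
      simp [hπ'def, robustify, hω₀]
    have hps : 0 < π' ω₀ s := by
      have := mul_nonneg (by linarith : (0:ℝ) ≤ 1 - α) (hπ.1 ω₀ s)
      linarith
    exact mul_pos (hμpos ω₀) hps
  have hmle1 : marg μ π' s ≤ 1 := by
    calc marg μ π' s = ∑ ω, μ ω * π' ω s := rfl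
      _ ≤ ∑ ω, μ ω := Finset.sum_le_sum (fun ω _ => by
          nlinarith [hμpos ω, hπ'le1 ω s, hπ'nonneg ω s])
      _ = 1 := hμ.2
  refine ⟨hmpos, fun a ha => ?_⟩
  -- rewrite advTerm as a quotient
  have hadv' : ∀ (q : Ω → A → ℝ), advTerm μ q v s a =
      (∑ ω, μ ω * q ω s * (v s ω - v a ω)) / marg μ q s := by
    intro q
    simp only [advTerm, post]
    rw [Finset.sum_div]
    exact Finset.sum_congr rfl (fun ω _ => by rw [div_mul_eq_mul_div])
  set N := ∑ ω, μ ω * π' ω s * (v s ω - v a ω) with hN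
  set S1 := ∑ ω, μ ω * π ω s * (v s ω - v a ω) with hS1
  set S2 := ∑ ω, (if s = aOf ω then μ ω * (v s ω - v a ω) else 0) with hS2
  have hsplit : N = (1 - α) * S1 + α * S2 := by
    rw [hN, hS1, hS2, Finset.mul_sum, Finset.mul_sum, ← Finset.sum_add_distrib]
    refine Finset.sum_congr rfl (fun ω _ => ?_)
    simp only [hπ'def, robustify]
    split <;> ring
  -- S1 ≥ 0
  have hmargnn : 0 ≤ marg μ π s :=
    Finset.sum_nonneg (fun ω _ => mul_nonneg (hμpos ω).le (hπ.1 ω s))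
  have hS1nn : 0 ≤ S1 := by
    rcases eq_or_lt_of_le hmargnn with hm0 | hm0
    · have hz : ∀ ω ∈ Finset.univ, μ ω * π ω s = 0 := by
        rw [← Finset.sum_eq_zero_iff_of_nonneg
          (fun ω _ => mul_nonneg (hμpos ω).le (hπ.1 ω s))]
        exact hm0.symm
      rw [hS1]
      apply le_of_eq
      refine (Finset.sum_eq_zero (fun ω _ => ?_)).symm
      rw [hz ω (Finset.mem_univ ω), zero_mul]
    · have := hadv s hm0 a ha
      rw [hadv' π] at this
      have := (div_nonneg_iff.mp this)
      rcases this with ⟨h1, _⟩ | ⟨_, h2⟩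
      · exact h1
      · linarith
  -- S2 ≥ μ_min * Δ
  have hminle : minPrior μ ≤ μ ω₀ := Finset.inf'_le μ (Finset.mem_univ ω₀)
  have hminpos : 0 < minPrior μ := by
    rw [minPrior, Finset.lt_inf'_iff]
    exact fun ω _ => hμpos ω
  have hterm_nn : ∀ ω, 0 ≤ (if s = aOf ω then μ ω * (v s ω - v a ω) else 0) := by
    intro ω
    split
    · next h =>
      have hΔω : Δ ≤ v s ω - v a ω := by
        have := hΔ ω a (by rw [← h]; exact ha)
        rw [← h] at this
        exact this
      exact mul_nonneg (hμpos ω).le (by linarith)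
    · exact le_rfl
  have hS2ge : minPrior μ * Δ ≤ S2 := by
    have hΔω₀ : Δ ≤ v s ω₀ - v a ω₀ := by
      have := hΔ ω₀ a (by rw [hω₀]; exact ha)
      rw [hω₀] at this
      exact this
    calc minPrior μ * Δ ≤ μ ω₀ * (v s ω₀ - v a ω₀) := by
          apply mul_le_mul hminle hΔω₀ hΔpos.le (hμpos ω₀).le
      _ = (if s = aOf ω₀ then μ ω₀ * (v s ω₀ - v a ω₀) else 0) := by
          rw [if_pos hω₀.symm]
      _ ≤ S2 := Finset.single_le_sum (fun ω _ => hterm_nn ω) (Finset.mem_univ ω₀)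
  have hNge : α * minPrior μ * Δ ≤ N := by
    rw [hsplit]
    have h1 : 0 ≤ (1 - α) * S1 := mul_nonneg (by linarith) hS1nn
    nlinarith
  rw [hadv' π', le_div_iff₀ hmpos]
  have hc : 0 ≤ α * minPrior μ * Δ := by positivity
  nlinarith
end
end

section
/- Assume Assumption A holds and μ(ω) > 0 for every ω (write μ_min = min_ω μ(ω)). Let γ ≥ 0 with α := γ/(μ_min·Δ) ≤ 1, and let π be a direct-revelation scheme such that adv_π(s) ≥ −γ for every s ∈ A with π(s) > 0. Then the α-robustification π' of π satisfies adv_{π'}(s) ≥ 0 for every s ∈ A with π'(s) > 0; in particular the obedient strategy is exactly best-responding under π'. -/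
open Finset
open scoped BigOperators Classical

noncomputable section

lemma advTerm_eq_div {Ω A : Type*} [Fintype Ω] (μ : Ω → ℝ) (π : Ω → A → ℝ) (v : A → Ω → ℝ)
    (s a : A) :
    advTerm μ π v s a = (∑ ω, μ ω * π ω s * (v s ω - v a ω)) / marg μ π s := by
  unfold advTerm post
  rw [Finset.sum_div]
  exact Finset.sum_congr rfl (fun ω _ => by ring)

lemma advTerm_eq_sub {Ω A : Type*} [Fintype Ω] (μ : Ω → ℝ) (π : Ω → A → ℝ) (v : A → Ω → ℝ)
    (s a : A) :
    advTerm μ π v s a = vPost μ π v s s - vPost μ π v a s := by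
  unfold advTerm vPost
  rw [← Finset.sum_sub_distrib]
  exact Finset.sum_congr rfl (fun ω _ => by ring)

/-- under Assumption A with a fully supported prior, if the direct-revelation
scheme `π` has `adv_π(s) ≥ -γ` on all sent signals and `α := γ/(μ_min·Δ) ≤ 1`, then the
`α`-robustification `π'` of `π` has `adv_{π'}(s) ≥ 0` on all sent signals; in particular, the
obedient strategy is exactly (`0`-)best-responding under `π'`. -/
theorem robustified_obedient_exact
    {Ω A : Type*} [Fintype Ω] [Fintype A] [Nonempty Ω] [Nonempty A]
    (μ : Ω → ℝ) (hμ : IsProb μ) (hμpos : ∀ ω, 0 < μ ω)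
    (v : A → Ω → ℝ) (hv : ∀ a ω, 0 ≤ v a ω ∧ v a ω ≤ 1)
    -- Assumption A
    (aOf : Ω → A) (hBest : ∀ ω a, a ≠ aOf ω → v a ω < v (aOf ω) ω)
    (Δ : ℝ) (hΔpos : 0 < Δ) (hΔ : ∀ ω a, a ≠ aOf ω → Δ ≤ v (aOf ω) ω - v a ω)
    (hOnto : ∀ a, ∃ ω, aOf ω = a)
    (γ : ℝ) (hγ : 0 ≤ γ) (hα1 : γ / (minPrior μ * Δ) ≤ 1)
    (π : Ω → A → ℝ) (hπ : IsDist π)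
    (hadv : ∀ s, 0 < marg μ π s → ∀ a, a ≠ s → -γ ≤ advTerm μ π v s a) :
    (∀ s, 0 < marg μ (robustify π aOf (γ / (minPrior μ * Δ))) s →
      ∀ a, a ≠ s → 0 ≤ advTerm μ (robustify π aOf (γ / (minPrior μ * Δ))) v s a) ∧
    IsBRStrategy μ (robustify π aOf (γ / (minPrior μ * Δ))) v 0 obedient := by
  
  set α := γ / (minPrior μ * Δ) with hαdef
  have hμmin : 0 < minPrior μ := by
    rw [minPrior]
    exact (Finset.lt_inf'_iff _).mpr (fun b _ => hμpos b)
  have hmd : 0 < minPrior μ * Δ := mul_pos hμmin hΔpos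
  have hα0 : 0 ≤ α := div_nonneg hγ hmd.le
  have hα1' : 0 ≤ 1 - α := by linarith
  have hαγ : α * (minPrior μ * Δ) = γ := div_mul_cancel₀ γ hmd.ne'
  have main : ∀ s, 0 < marg μ (robustify π aOf α) s →
      ∀ a, a ≠ s → 0 ≤ advTerm μ (robustify π aOf α) v s a := by
    intro s hms a has
    rw [advTerm_eq_div]
    apply div_nonneg _ hms.le
    have hdecomp : (∑ ω, μ ω * robustify π aOf α ω s * (v s ω - v a ω))
        = (1 - α) * (∑ ω, μ ω * π ω s * (v s ω - v a ω))
          + α * (∑ ω ∈ Finset.univ.filter (fun ω => s = aOf ω),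
              μ ω * (v s ω - v a ω)) := by
      rw [Finset.mul_sum, Finset.mul_sum, Finset.sum_filter, ← Finset.sum_add_distrib]
      refine Finset.sum_congr rfl (fun ω _ => ?_)
      unfold robustify
      split_ifs <;> ring
    rw [hdecomp]
    have hT : -γ ≤ ∑ ω, μ ω * π ω s * (v s ω - v a ω) := by
      by_cases hm : 0 < marg μ π s
      · have h1 := hadv s hm a has
        have hTm : ∑ ω, μ ω * π ω s * (v s ω - v a ω) = advTerm μ π v s a * marg μ π s := by
          rw [advTerm_eq_div, div_mul_cancel₀ _ hm.ne']
        have hm1 : marg μ π s ≤ 1 := by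
          have hle : marg μ π s ≤ ∑ ω, μ ω := by
            apply Finset.sum_le_sum
            intro ω _
            have hle1 : π ω s ≤ 1 := by
              rw [← hπ.2 ω]
              exact Finset.single_le_sum (fun y _ => hπ.1 ω y) (Finset.mem_univ s)
            nlinarith [(hμpos ω).le, hπ.1 ω s]
          rw [hμ.2] at hle
          exact hle
        rw [hTm]
        nlinarith
      · have hm0 : marg μ π s = 0 := by
          have h0 : 0 ≤ marg μ π s :=
            Finset.sum_nonneg (fun ω _ => mul_nonneg (hμpos ω).le (hπ.1 ω s))
          linarith [not_lt.mp hm]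
        have hzero : ∀ ω ∈ Finset.univ, μ ω * π ω s * (v s ω - v a ω) = (0 : ℝ) := by
          intro ω _
          have h0 : μ ω * π ω s = 0 :=
            (Finset.sum_eq_zero_iff_of_nonneg
              (fun ω _ => mul_nonneg (hμpos ω).le (hπ.1 ω s))).mp hm0 ω (Finset.mem_univ ω)
          rw [h0, zero_mul]
        rw [Finset.sum_eq_zero hzero]
        linarith
    obtain ⟨ω₀, hω₀⟩ := hOnto s
    have hmemf : ω₀ ∈ Finset.univ.filter (fun ω => s = aOf ω) := by
      simp [hω₀]
    have hR : minPrior μ * Δ ≤ ∑ ω ∈ Finset.univ.filter (fun ω => s = aOf ω),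
        μ ω * (v s ω - v a ω) := by
      have hsingle := Finset.single_le_sum (f := fun ω => μ ω * (v s ω - v a ω))
        (fun ω hω => ?_) hmemf
      · refine le_trans ?_ hsingle
        show minPrior μ * Δ ≤ μ ω₀ * (v s ω₀ - v a ω₀)
        have hd : Δ ≤ v s ω₀ - v a ω₀ := by
          have hh := hΔ ω₀ a (by rw [hω₀]; exact has)
          rwa [hω₀] at hh
        have hmin : minPrior μ ≤ μ ω₀ := Finset.inf'_le μ (Finset.mem_univ ω₀)
        nlinarith [hμpos ω₀, hμmin]
      · simp only [Finset.mem_filter] at hω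
        have hd : Δ ≤ v s ω - v a ω := by
          have hh := hΔ ω a (by rw [← hω.2]; exact has)
          rwa [← hω.2] at hh
        show (0:ℝ) ≤ μ ω * (v s ω - v a ω)
        nlinarith [hμpos ω]
    nlinarith
  refine ⟨main, ?_⟩
  intro s hms a hnbr
  unfold obedient
  split_ifs with h
  · exfalso
    apply hnbr
    subst h
    intro a'
    by_cases ha' : a' = a
    · subst ha'; simp
    · have h0 := main a hms a' ha'
      rw [advTerm_eq_sub] at h0
      linarith
  · rfl
end
end

section
/- Let λ > 1 with |A|·λ ≥ 1. Let π be a signaling scheme, and let ρ be the quantal-response strategy: for each signal s with π(s) > 0, ρ(a|s) = exp(λ·v(a,μ_s)) / Σ_{a'∈A} exp(λ·v(a',μ_s)). Then ρ is a (γ, δ)-best-responding strategy with γ = log(|A|·λ)/λ and δ = 1/λ; that is, for every s with π(s) > 0, the total ρ(·|s)-probability of actions that are γ-best-responding to s is at least 1 − 1/λ. -/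
open Finset
open scoped BigOperators Classical

noncomputable section

/-- Example 1.2, quantal response: for `λ > 1` with `|A|·λ ≥ 1`, the
quantal-response strategy `ρ(a|s) = exp(λ·v(a,μ_s)) / Σ_{a'} exp(λ·v(a',μ_s))` is a
`(log(|A|·λ)/λ, 1/λ)`-best-responding strategy. -/
theorem quantal_response_approx_br
    {Ω S A : Type*} [Fintype Ω] [Fintype S] [Fintype A]
    [Nonempty Ω] [Nonempty S] [Nonempty A]
    (μ : Ω → ℝ) (hμ : IsProb μ)
    (π : Ω → S → ℝ) (hπ : IsDist π)
    (v : A → Ω → ℝ) (hv : ∀ a ω, 0 ≤ v a ω ∧ v a ω ≤ 1)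
    (lam : ℝ) (hlam : 1 < lam) (hAlam : 1 ≤ (Fintype.card A : ℝ) * lam)
    (ρ : S → A → ℝ)
    (hρ : ∀ s, 0 < marg μ π s → ∀ a, ρ s a =
      Real.exp (lam * vPost μ π v a s) / ∑ a' : A, Real.exp (lam * vPost μ π v a' s)) :
    IsApproxBRStrategy μ π v (Real.log ((Fintype.card A : ℝ) * lam) / lam) (1 / lam) ρ := by
  intro s hs
  set γ := Real.log ((Fintype.card A : ℝ) * lam) / lam with hγ
  have hlam0 : (0:ℝ) < lam := by linarith
  set K : ℝ := (Fintype.card A : ℝ) * lam with hK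
  have hK0 : (0:ℝ) < K := by linarith
  set f : A → ℝ := fun a => vPost μ π v a s with hf
  set D : ℝ := ∑ a' : A, Real.exp (lam * f a') with hD
  have hDpos : 0 < D := Finset.sum_pos (fun a _ => Real.exp_pos _) Finset.univ_nonempty
  have hρs : ∀ a, ρ s a = Real.exp (lam * f a) / D := fun a => hρ s hs a
  obtain ⟨a0, -, ha0⟩ := Finset.exists_max_image Finset.univ f Finset.univ_nonempty
  set M := f a0 with hM
  have hDM : Real.exp (lam * M) ≤ D :=
    Finset.single_le_sum (f := fun a => Real.exp (lam * f a))
      (fun a _ => (Real.exp_pos _).le) (Finset.mem_univ a0)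
  have hbound : ∀ a, ¬ IsBR μ π v γ a s → ρ s a ≤ 1 / K := by
    intro a ha
    simp only [IsBR, not_forall, not_le] at ha
    obtain ⟨a', ha'⟩ := ha
    have hfa : f a < M - γ := by
      have := ha0 a' (Finset.mem_univ a')
      simp only [hf, hM] at *
      linarith
    have h1 : Real.exp (lam * f a) ≤ Real.exp (lam * (M - γ)) := by
      apply Real.exp_le_exp.mpr
      nlinarith
    have h2 : Real.exp (lam * (M - γ)) = Real.exp (lam * M) / K := by
      rw [mul_sub, Real.exp_sub]
      congr 1
      rw [hγ, mul_div_cancel₀ _ (ne_of_gt hlam0)]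
      exact Real.exp_log hK0
    have h3 : Real.exp (lam * M) / K / D ≤ 1 / K := by
      rw [div_div, div_le_div_iff₀ (by positivity) hK0]
      nlinarith
    calc ρ s a = Real.exp (lam * f a) / D := hρs a
      _ ≤ Real.exp (lam * M) / K / D := by
          rw [← h2]; exact div_le_div_of_nonneg_right h1 hDpos.le
      _ ≤ 1 / K := h3
  have hsum1 : ∑ a, ρ s a = 1 := by
    simp only [hρs]
    rw [← Finset.sum_div, ← hD, div_self (ne_of_gt hDpos)]
  have hsplit := Finset.sum_filter_add_sum_filter_not Finset.univ
    (fun a => IsBR μ π v γ a s) (ρ s)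
  have hnb : ∑ a ∈ Finset.univ.filter (fun a => ¬ IsBR μ π v γ a s), ρ s a ≤ 1 / lam := by
    have h1 : ∑ a ∈ Finset.univ.filter (fun a => ¬ IsBR μ π v γ a s), ρ s a
        ≤ (Finset.univ.filter (fun a => ¬ IsBR μ π v γ a s)).card * (1 / K) := by
      calc ∑ a ∈ Finset.univ.filter (fun a => ¬ IsBR μ π v γ a s), ρ s a
          ≤ ∑ _a ∈ Finset.univ.filter (fun a => ¬ IsBR μ π v γ a s), (1 / K) :=
            Finset.sum_le_sum (fun a haf => hbound a (Finset.mem_filter.mp haf).2)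
        _ = _ := by rw [Finset.sum_const, nsmul_eq_mul]
    have hcard : ((Finset.univ.filter (fun a => ¬ IsBR μ π v γ a s)).card : ℝ)
        ≤ (Fintype.card A : ℝ) := by
      exact_mod_cast Finset.card_filter_le _ _
    have h2 : ((Finset.univ.filter (fun a => ¬ IsBR μ π v γ a s)).card : ℝ) * (1 / K)
        ≤ (Fintype.card A : ℝ) * (1 / K) := by
      apply mul_le_mul_of_nonneg_right hcard (by positivity)
    have h3 : (Fintype.card A : ℝ) * (1 / K) ≤ 1 / lam := by
      have hA0 : (0:ℝ) < (Fintype.card A : ℝ) := by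
        exact_mod_cast Fintype.card_pos
      have heq : (Fintype.card A : ℝ) * (1 / K) = 1 / lam := by
        rw [hK]; field_simp
      linarith
    calc _ ≤ _ := h1
      _ ≤ _ := by push_cast; linarith [h2]
  have := hsplit
  linarith [hnb, hsplit, hsum1]
end
end

section
/- Fix a signaling scheme π and t ≥ 1, and let (ω_τ, s_τ) for τ = 1,…,t be i.i.d. random pairs on Ω × S with joint law P(ω,s) = μ(ω)·π(s|ω). For each s, let N_s = #{τ ≤ t : s_τ = s}, and when N_s > 0 define the empirical utility v̂(a,s) = (1/N_s)·Σ_{τ ≤ t, s_τ = s} v(a, ω_τ). Suppose that for every s ∈ S with π(s) > 0 one has √(3·log(2|S|t)/(π(s)·t)) < 1/2. Then with probability at least 1 − 2/t the following event holds: for every s ∈ S with π(s) > 0, N_s > 0 and for every a ∈ A, |v̂(a,s) − v(a, μ_s)| ≤ 2·√(3·log(2|S|t)/(π(s)·t)) + (2/π(s))·√(log(2|S||A|t)/(2t)). -/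
open Finset
open scoped BigOperators Classical

noncomputable section

open MeasureTheory ProbabilityTheory

section auxconc

open Real

lemma chord_exp {x c : ℝ} (h0 : 0 ≤ x) (h1 : x ≤ 1) :
    Real.exp (c * x) ≤ 1 - x + x * Real.exp c := by
  have h := convexOn_exp.2 (Set.mem_univ (0:ℝ)) (Set.mem_univ c)
    (show (0:ℝ) ≤ 1 - x by linarith) h0 (show (1-x) + x = 1 by ring)
  simp only [smul_eq_mul, mul_zero, zero_add, Real.exp_zero, mul_one] at h
  have : c * x = x * c := by ring
  rw [this]
  linarith

lemma log_one_add_ge {x : ℝ} (hx : 0 ≤ x) : x / (1 + x) ≤ Real.log (1 + x) := by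
  have hpos : (0:ℝ) < 1 + x := by linarith
  have h := Real.log_le_sub_one_of_pos (x := (1 + x)⁻¹) (by positivity)
  rw [Real.log_inv] at h
  have he : 1 - (1 + x)⁻¹ = x / (1 + x) := by field_simp; ring
  linarith [he ▸ (show 1 - (1 + x)⁻¹ ≤ Real.log (1 + x) by linarith)]

lemma chernoff_up_ineq {e : ℝ} (h0 : 0 ≤ e) (h1 : e ≤ 1/2) :
    e^2 / 3 ≤ (1 + e) * Real.log (1 + e) - e := by
  set F : ℝ → ℝ := fun x => (1 + x) * Real.log (1 + x) - x - x^2/3 with hF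
  have key : ∀ x ∈ Set.Icc (0:ℝ) (1/2), ∀ hx : 0 < 1 + x,
      HasDerivAt F (Real.log (1 + x) - 2*x/3) x := by
    intro x _ hpos
    have h1' : HasDerivAt (fun y : ℝ => 1 + y) 1 x := (hasDerivAt_id x).const_add 1
    have hlog : HasDerivAt (fun y : ℝ => Real.log (1 + y)) (1 / (1 + x)) x := by
      simpa using h1'.log hpos.ne'
    have hmul : HasDerivAt (fun y : ℝ => (1 + y) * Real.log (1 + y))
        (1 * Real.log (1 + x) + (1 + x) * (1 / (1 + x))) x := h1'.mul hlog
    have hq : HasDerivAt (fun y : ℝ => y + y^2/3) (1 + 2*x/3) x := by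
      have h2 : HasDerivAt (fun y : ℝ => y^2/3) (2*x/3) x := by
        have := (hasDerivAt_pow 2 x).div_const 3
        simpa [pow_one] using this
      exact (hasDerivAt_id x).add h2
    have := hmul.sub hq
    have hinv : (1 + x) * (1 / (1 + x)) = 1 := by field_simp
    have harr : 1 * Real.log (1 + x) + (1 + x) * (1 / (1 + x)) - (1 + 2*x/3)
        = Real.log (1 + x) - 2*x/3 := by rw [hinv]; ring
    rw [harr] at this
    have hfe : F = ((fun y : ℝ => (1 + y) * Real.log (1 + y)) - fun y : ℝ => y + y ^ 2 / 3) := by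
      funext y
      simp only [hF, Pi.sub_apply]
      ring
    rw [hfe]; exact this
  have hmono : MonotoneOn F (Set.Icc (0:ℝ) (1/2)) := by
    apply monotoneOn_of_deriv_nonneg (convex_Icc _ _)
    · intro x hx
      have hpos : (0:ℝ) < 1 + x := by linarith [hx.1]
      exact (key x hx hpos).continuousAt.continuousWithinAt
    · intro x hx
      rw [interior_Icc] at hx
      have hpos : (0:ℝ) < 1 + x := by linarith [hx.1]
      exact (key x (Set.mem_Icc_of_Ioo hx) hpos).differentiableAt.differentiableWithinAt
    · intro x hx
      rw [interior_Icc] at hx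
      have hpos : (0:ℝ) < 1 + x := by linarith [hx.1]
      rw [(key x (Set.mem_Icc_of_Ioo hx) hpos).deriv]
      have hlb := log_one_add_ge (le_of_lt hx.1)
      have : 2*x/3 ≤ x / (1 + x) := by
        rw [div_le_div_iff₀ (by norm_num) hpos]
        nlinarith [hx.1.le, hx.2.le]
      linarith
  have h0F : F 0 = 0 := by simp [hF]
  have := hmono (Set.mem_Icc.2 ⟨le_refl 0, by norm_num⟩) (Set.mem_Icc.2 ⟨h0, h1⟩) h0
  rw [h0F] at this
  simp only [hF] at this
  linarith

lemma chernoff_lo_ineq {e : ℝ} (h0 : 0 ≤ e) (h1 : e ≤ 1/2) :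
    e^2 / 3 ≤ e + (1 - e) * Real.log (1 - e) := by
  set F : ℝ → ℝ := fun x => x + (1 - x) * Real.log (1 - x) - x^2/3 with hF
  have key : ∀ x ∈ Set.Icc (0:ℝ) (1/2), ∀ hx : 0 < 1 - x,
      HasDerivAt F (- Real.log (1 - x) - 2*x/3) x := by
    intro x _ hpos
    have h1' : HasDerivAt (fun y : ℝ => 1 - y) (-1) x := by
      simpa using (hasDerivAt_id x).const_sub 1
    have hlog : HasDerivAt (fun y : ℝ => Real.log (1 - y)) (-1 / (1 - x)) x := by
      simpa using h1'.log hpos.ne'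
    have hmul : HasDerivAt (fun y : ℝ => (1 - y) * Real.log (1 - y))
        ((-1) * Real.log (1 - x) + (1 - x) * (-1 / (1 - x))) x := h1'.mul hlog
    have hq : HasDerivAt (fun y : ℝ => x^2/3) 0 x := hasDerivAt_const x _
    have h2 : HasDerivAt (fun y : ℝ => y^2/3) (2*x/3) x := by
      have := (hasDerivAt_pow 2 x).div_const 3
      simpa [pow_one] using this
    have := ((hasDerivAt_id x).add hmul).sub h2
    have hinv : (1 - x) * (-1 / (1 - x)) = -1 := by field_simp
    have harr : 1 + ((-1) * Real.log (1 - x) + (1 - x) * (-1 / (1 - x))) - 2*x/3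
        = - Real.log (1 - x) - 2*x/3 := by rw [hinv]; ring
    rw [harr] at this
    exact this
  have hmono : MonotoneOn F (Set.Icc (0:ℝ) (1/2)) := by
    apply monotoneOn_of_deriv_nonneg (convex_Icc _ _)
    · intro x hx
      have hpos : (0:ℝ) < 1 - x := by linarith [hx.2]
      exact (key x hx hpos).continuousAt.continuousWithinAt
    · intro x hx
      rw [interior_Icc] at hx
      have hpos : (0:ℝ) < 1 - x := by linarith [hx.2]
      exact (key x (Set.mem_Icc_of_Ioo hx) hpos).differentiableAt.differentiableWithinAt
    · intro x hx
      rw [interior_Icc] at hx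
      have hpos : (0:ℝ) < 1 - x := by linarith [hx.2]
      rw [(key x (Set.mem_Icc_of_Ioo hx) hpos).deriv]
      have := Real.log_le_sub_one_of_pos hpos
      linarith [hx.1.le]
  have h0F : F 0 = 0 := by simp [hF]
  have := hmono (Set.mem_Icc.2 ⟨le_refl 0, by norm_num⟩) (Set.mem_Icc.2 ⟨h0, h1⟩) h0
  rw [h0F] at this
  simp only [hF] at this
  linarith



lemma hoeffding_mgf {m : ℝ} (hm0 : 0 ≤ m) (hm1 : m ≤ 1) {c : ℝ} (hc : 0 ≤ c) :
    1 - m + m * Real.exp c ≤ Real.exp (c * m + c^2/8) := by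
  have hpos : ∀ x : ℝ, 0 < 1 - m + m * Real.exp x := by
    intro x
    rcases eq_or_lt_of_le hm1 with h | h
    · simp [← h]; positivity
    · have : 0 < 1 - m := by linarith
      have : 0 ≤ m * Real.exp x := by positivity
      linarith
  -- the function h x = 1 - m + m * exp x
  have hh : ∀ x : ℝ, HasDerivAt (fun y : ℝ => 1 - m + m * Real.exp y) (m * Real.exp x) x :=
    fun x => ((Real.hasDerivAt_exp x).const_mul m).const_add (1 - m)
  -- G = derivative of F
  set G : ℝ → ℝ := fun x => m * Real.exp x / (1 - m + m * Real.exp x) - m - x/4 with hG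
  have hGderiv : ∀ x : ℝ, HasDerivAt G
      (m * Real.exp x * (1 - m) / (1 - m + m * Real.exp x)^2 - 1/4) x := by
    intro x
    have hnum : HasDerivAt (fun y : ℝ => m * Real.exp y) (m * Real.exp x) x :=
      (Real.hasDerivAt_exp x).const_mul m
    have hdiv := hnum.div (hh x) (hpos x).ne'
    have hx4 : HasDerivAt (fun y : ℝ => y/4) (1/4) x := (hasDerivAt_id x).div_const 4
    have hcomb := (hdiv.sub_const m).sub hx4
    refine hcomb.congr_deriv ?_
    have h2 := (hpos x).ne'
    field_simp
    ring
  have hGanti : Antitone G := by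
    apply antitone_of_deriv_nonpos
    · intro x; exact (hGderiv x).differentiableAt
    · intro x
      rw [(hGderiv x).deriv]
      have hp := hpos x
      have hAM : m * Real.exp x * (1 - m) ≤ (1 - m + m * Real.exp x)^2 / 4 := by
        nlinarith [sq_nonneg (m * Real.exp x - (1 - m))]
      have : m * Real.exp x * (1 - m) / (1 - m + m * Real.exp x)^2 ≤ 1/4 := by
        rw [div_le_iff₀ (by positivity)]
        linarith
      linarith
  have hG0 : G 0 = 0 := by simp [hG]
  set F : ℝ → ℝ := fun x => Real.log (1 - m + m * Real.exp x) - (x * m + x^2/8) with hFdef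
  have hFderiv : ∀ x : ℝ, HasDerivAt F (G x) x := by
    intro x
    have hlog : HasDerivAt (fun y : ℝ => Real.log (1 - m + m * Real.exp y))
        (m * Real.exp x / (1 - m + m * Real.exp x)) x := (hh x).log (hpos x).ne'
    have hq : HasDerivAt (fun y : ℝ => y * m + y^2/8) (m + x/4) x := by
      have h2 : HasDerivAt (fun y : ℝ => y^2/8) (x/4) x := by
        have := (hasDerivAt_pow 2 x).div_const 8
        norm_num at this
        refine this.congr_deriv ?_
        ring
      have := ((hasDerivAt_id x).mul_const m).add h2
      simp only [one_mul] at this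
      exact this
    have := hlog.sub hq
    have : HasDerivAt F (m * Real.exp x / (1 - m + m * Real.exp x) - (m + x/4)) x := this
    convert this using 1
    simp [hG]; ring
  have hFanti : AntitoneOn F (Set.Ici 0) := by
    apply antitoneOn_of_deriv_nonpos (convex_Ici 0)
    · exact fun x _ => (hFderiv x).continuousAt.continuousWithinAt
    · intro x _
      exact (hFderiv x).differentiableAt.differentiableWithinAt
    · intro x hx
      rw [interior_Ici] at hx
      rw [(hFderiv x).deriv]
      calc G x ≤ G 0 := hGanti (le_of_lt hx)
        _ = 0 := hG0
  have hF0 : F 0 = 0 := by simp [hFdef]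
  have hFc : F c ≤ 0 := by
    have := hFanti (Set.mem_Ici.2 (le_refl 0)) (Set.mem_Ici.2 hc) hc
    rw [hF0] at this; exact this
  have : Real.log (1 - m + m * Real.exp c) ≤ c * m + c^2/8 := by
    simp only [hFdef] at hFc; linarith
  calc 1 - m + m * Real.exp c = Real.exp (Real.log (1 - m + m * Real.exp c)) :=
        (Real.exp_log (hpos c)).symm
    _ ≤ Real.exp (c * m + c^2/8) := Real.exp_le_exp.2 this
open MeasureTheory ProbabilityTheory Real

section glue
variable {Q : Type*} [Fintype Q] [MeasurableSpace Q] [MeasurableSingletonClass Q]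
  {Θ : Type*} [MeasurableSpace Θ] {P : Measure Θ} [IsProbabilityMeasure P]
  {t : ℕ} {X : Fin t → Θ → Q}

lemma integral_comp_fin (hmeas : ∀ τ, Measurable (X τ)) {w : Q → ℝ} (hw : ∀ q, 0 ≤ w q)
    (hlaw : ∀ τ q, P {θ | X τ θ = q} = ENNReal.ofReal (w q)) (g : Q → ℝ) (τ : Fin t) :
    ∫ θ, g (X τ θ) ∂P = ∑ q, w q * g q := by
  classical
  have key : ∀ θ, g (X τ θ) = ∑ q, if X τ θ = q then g q else 0 := by
    intro θ
    rw [Finset.sum_ite_eq Finset.univ (X τ θ) g]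
    simp
  have hsets : ∀ q : Q, MeasurableSet (X τ ⁻¹' {q}) :=
    fun q => (hmeas τ) (measurableSet_singleton q)
  have hind : ∀ q : Q, (fun θ => if X τ θ = q then g q else 0)
      = Set.indicator (X τ ⁻¹' {q}) (fun _ => g q) := by
    intro q; ext θ; simp [Set.indicator_apply]
  calc ∫ θ, g (X τ θ) ∂P = ∫ θ, ∑ q, (if X τ θ = q then g q else 0) ∂P := by
        congr 1; ext θ; exact key θ
    _ = ∑ q, ∫ θ, (if X τ θ = q then g q else 0) ∂P := by
        apply integral_finset_sum
        intro q _
        rw [hind q]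
        exact (integrable_const (g q)).indicator (hsets q)
    _ = ∑ q, w q * g q := by
        apply Finset.sum_congr rfl
        intro q _
        rw [hind q, integral_indicator_const _ (hsets q)]
        have hpre : X τ ⁻¹' {q} = {θ | X τ θ = q} := by ext θ; simp
        rw [hpre, measureReal_def, hlaw τ q, smul_eq_mul, ENNReal.toReal_ofReal (hw q)]

lemma mgf_comp_fin (hmeas : ∀ τ, Measurable (X τ)) {w : Q → ℝ} (hw : ∀ q, 0 ≤ w q)
    (hlaw : ∀ τ q, P {θ | X τ θ = q} = ENNReal.ofReal (w q))
    (hiid : iIndepFun X P) (g : Q → ℝ) (c : ℝ) :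
    mgf (∑ τ : Fin t, fun θ => g (X τ θ)) P c = (∑ q, w q * Real.exp (c * g q))^t := by
  have hfmeas : ∀ τ : Fin t, Measurable (fun θ => g (X τ θ)) :=
    fun τ => (Measurable.of_discrete (f := g)).comp (hmeas τ)
  have hind : iIndepFun (fun τ : Fin t => fun θ => g (X τ θ)) P := by
    have := hiid.comp (fun _ => g) (fun _ => Measurable.of_discrete)
    exact this
  rw [iIndepFun.mgf_sum hind hfmeas Finset.univ]
  have hterm : ∀ τ : Fin t, mgf (fun θ => g (X τ θ)) P c = ∑ q, w q * Real.exp (c * g q) := by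
    intro τ
    rw [mgf]
    exact integral_comp_fin hmeas hw hlaw (fun q => Real.exp (c * g q)) τ
  rw [Finset.prod_congr rfl (fun τ _ => hterm τ), Finset.prod_const, Finset.card_univ,
    Fintype.card_fin]

lemma integrable_exp_comp_fin [Nonempty Q] (hmeas : ∀ τ, Measurable (X τ)) (g : Q → ℝ) (c : ℝ) :
    Integrable (fun θ => Real.exp (c * (∑ τ : Fin t, fun θ' => g (X τ θ')) θ)) P := by
  have hfmeas : ∀ τ : Fin t, Measurable (fun θ => g (X τ θ)) :=
    fun τ => (Measurable.of_discrete (f := g)).comp (hmeas τ)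
  set C : ℝ := ∑ q, |g q| with hC
  have hgC : ∀ q, |g q| ≤ C :=
    fun q => Finset.single_le_sum (fun q _ => abs_nonneg (g q)) (Finset.mem_univ q)
  have hWmeas : Measurable (fun θ => (∑ τ : Fin t, fun θ' => g (X τ θ')) θ) := by
    simp only [Finset.sum_apply]
    exact Finset.measurable_sum _ (fun τ _ => hfmeas τ)
  have hWbound : ∀ θ, |(∑ τ : Fin t, fun θ' => g (X τ θ')) θ| ≤ t * C := by
    intro θ
    simp only [Finset.sum_apply]
    calc |∑ τ : Fin t, g (X τ θ)| ≤ ∑ τ : Fin t, |g (X τ θ)| :=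
          Finset.abs_sum_le_sum_abs _ _
      _ ≤ ∑ _τ : Fin t, C := Finset.sum_le_sum fun τ _ => hgC _
      _ = t * C := by simp [Finset.sum_const, Finset.card_univ, nsmul_eq_mul]
  apply Integrable.mono' (integrable_const (Real.exp (|c| * (t * C))))
    ((hWmeas.const_mul c).exp.aestronglyMeasurable)
  refine Filter.Eventually.of_forall fun θ => ?_
  rw [Real.norm_eq_abs, Real.abs_exp]
  apply Real.exp_le_exp.2
  calc c * _ ≤ |c * (∑ τ : Fin t, fun θ' => g (X τ θ')) θ| := le_abs_self _
    _ = |c| * |(∑ τ : Fin t, fun θ' => g (X τ θ')) θ| := abs_mul _ _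
    _ ≤ |c| * (t * C) := mul_le_mul_of_nonneg_left (hWbound θ) (abs_nonneg c)

lemma chernoff_upper_fin [Nonempty Q] (hmeas : ∀ τ, Measurable (X τ)) {w : Q → ℝ}
    (hw : ∀ q, 0 ≤ w q)
    (hlaw : ∀ τ q, P {θ | X τ θ = q} = ENNReal.ofReal (w q))
    (hiid : iIndepFun X P) (g : Q → ℝ) {c : ℝ} (hc : 0 ≤ c) (a : ℝ) :
    P {θ | a ≤ ∑ τ : Fin t, g (X τ θ)} ≤
      ENNReal.ofReal (Real.exp (-(c*a)) * (∑ q, w q * Real.exp (c * g q))^t) := by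
  have hint := integrable_exp_comp_fin (P := P) hmeas g c
  have hchern := measure_ge_le_exp_mul_mgf (μ := P)
    (X := fun θ => (∑ τ : Fin t, fun θ' => g (X τ θ')) θ) a hc hint
  have hmgf := mgf_comp_fin hmeas hw hlaw hiid g c
  have hset : {θ | a ≤ ∑ τ : Fin t, g (X τ θ)}
      = {θ | a ≤ (fun θ => (∑ τ : Fin t, fun θ' => g (X τ θ')) θ) θ} := by
    ext θ; simp [Finset.sum_apply]
  rw [hset]
  rw [← ENNReal.ofReal_toReal (measure_ne_top P _)]
  apply ENNReal.ofReal_le_ofReal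
  calc (P _).toReal ≤ Real.exp (-c * a) *
        mgf (fun θ => (∑ τ : Fin t, fun θ' => g (X τ θ')) θ) P c := hchern
    _ = Real.exp (-(c*a)) * (∑ q, w q * Real.exp (c * g q))^t := by
        rw [neg_mul, hmgf]

lemma chernoff_lower_fin [Nonempty Q] (hmeas : ∀ τ, Measurable (X τ)) {w : Q → ℝ}
    (hw : ∀ q, 0 ≤ w q)
    (hlaw : ∀ τ q, P {θ | X τ θ = q} = ENNReal.ofReal (w q))
    (hiid : iIndepFun X P) (g : Q → ℝ) {c : ℝ} (hc : c ≤ 0) (a : ℝ) :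
    P {θ | (∑ τ : Fin t, g (X τ θ)) ≤ a} ≤
      ENNReal.ofReal (Real.exp (-(c*a)) * (∑ q, w q * Real.exp (c * g q))^t) := by
  have hint := integrable_exp_comp_fin (P := P) hmeas g c
  have hchern := measure_le_le_exp_mul_mgf (μ := P)
    (X := fun θ => (∑ τ : Fin t, fun θ' => g (X τ θ')) θ) a hc hint
  have hmgf := mgf_comp_fin hmeas hw hlaw hiid g c
  have hset : {θ | (∑ τ : Fin t, g (X τ θ)) ≤ a}
      = {θ | (fun θ => (∑ τ : Fin t, fun θ' => g (X τ θ')) θ) θ ≤ a} := by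
    ext θ; simp [Finset.sum_apply]
  rw [hset]
  rw [← ENNReal.ofReal_toReal (measure_ne_top P _)]
  apply ENNReal.ofReal_le_ofReal
  calc (P _).toReal ≤ Real.exp (-c * a) *
        mgf (fun θ => (∑ τ : Fin t, fun θ' => g (X τ θ')) θ) P c := hchern
    _ = Real.exp (-(c*a)) * (∑ q, w q * Real.exp (c * g q))^t := by
        rw [neg_mul, hmgf]

end glue
section tails
open MeasureTheory ProbabilityTheory
variable {Q : Type*} [Fintype Q] [MeasurableSpace Q] [MeasurableSingletonClass Q]
  {Θ : Type*} [MeasurableSpace Θ] {P : Measure Θ} [IsProbabilityMeasure P]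
  {t : ℕ} {X : Fin t → Θ → Q}

lemma chord_sum_le {w : Q → ℝ} (hw : ∀ q, 0 ≤ w q) (hwsum : ∑ q, w q = 1)
    (f : Q → ℝ) (hf01 : ∀ q, 0 ≤ f q ∧ f q ≤ 1) (c : ℝ) :
    ∑ q, w q * Real.exp (c * f q)
      ≤ 1 - (∑ q, w q * f q) + (∑ q, w q * f q) * Real.exp c := by
  calc ∑ q, w q * Real.exp (c * f q)
      ≤ ∑ q, w q * (1 - f q + f q * Real.exp c) := by
        apply Finset.sum_le_sum
        intro q _
        exact mul_le_mul_of_nonneg_left (chord_exp (hf01 q).1 (hf01 q).2) (hw q)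
    _ = ∑ q, (w q - w q * f q + (w q * f q) * Real.exp c) := by
        apply Finset.sum_congr rfl; intro q _; ring
    _ = 1 - (∑ q, w q * f q) + (∑ q, w q * f q) * Real.exp c := by
        rw [Finset.sum_add_distrib, Finset.sum_sub_distrib, ← Finset.sum_mul, hwsum]

lemma mgfv_nonneg {w : Q → ℝ} (hw : ∀ q, 0 ≤ w q) (f : Q → ℝ) (c : ℝ) :
    0 ≤ ∑ q, w q * Real.exp (c * f q) :=
  Finset.sum_nonneg fun q _ => mul_nonneg (hw q) (Real.exp_pos _).le

lemma tail_bound_upper [Nonempty Q] (hmeas : ∀ τ, Measurable (X τ)) {w : Q → ℝ}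
    (hw : ∀ q, 0 ≤ w q) (hwsum : ∑ q, w q = 1)
    (hlaw : ∀ τ q, P {θ | X τ θ = q} = ENNReal.ofReal (w q))
    (hiid : iIndepFun X P)
    (f : Q → ℝ) (hf01 : ∀ q, 0 ≤ f q ∧ f q ≤ 1) {d : ℝ} (hd : 0 ≤ d) :
    P {θ | ((∑ q, w q * f q) + d) * t ≤ ∑ τ : Fin t, f (X τ θ)}
      ≤ ENNReal.ofReal (Real.exp (-(2 * t * d^2))) := by
  set m := ∑ q, w q * f q with hm
  have hm0 : 0 ≤ m := Finset.sum_nonneg fun q _ => mul_nonneg (hw q) (hf01 q).1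
  have hm1 : m ≤ 1 := by
    rw [hm, ← hwsum]
    exact Finset.sum_le_sum fun q _ => by
      nlinarith [(hf01 q).1, (hf01 q).2, hw q]
  have hc : (0:ℝ) ≤ 4 * d := by linarith
  refine (chernoff_upper_fin hmeas hw hlaw hiid f hc ((m + d) * t)).trans ?_
  apply ENNReal.ofReal_le_ofReal
  have hSig : ∑ q, w q * Real.exp (4 * d * f q) ≤ Real.exp ((4*d) * m + (4*d)^2/8) :=
    (chord_sum_le hw hwsum f hf01 _).trans (hoeffding_mgf hm0 hm1 hc)
  calc Real.exp (-(4 * d * ((m + d) * t))) * (∑ q, w q * Real.exp (4 * d * f q))^t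
      ≤ Real.exp (-(4 * d * ((m + d) * t))) * (Real.exp ((4*d) * m + (4*d)^2/8))^t := by
        apply mul_le_mul_of_nonneg_left _ (Real.exp_pos _).le
        exact pow_le_pow_left₀ (mgfv_nonneg hw f _) hSig t
    _ = Real.exp (-(4 * d * ((m + d) * t)) + t * ((4*d) * m + (4*d)^2/8)) := by
        rw [← Real.exp_nat_mul, ← Real.exp_add]
    _ = Real.exp (-(2 * t * d^2)) := by ring_nf
  
lemma tail_rel_upper [Nonempty Q] (hmeas : ∀ τ, Measurable (X τ)) {w : Q → ℝ}
    (hw : ∀ q, 0 ≤ w q) (hwsum : ∑ q, w q = 1)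
    (hlaw : ∀ τ q, P {θ | X τ θ = q} = ENNReal.ofReal (w q))
    (hiid : iIndepFun X P)
    (f : Q → ℝ) (hf01 : ∀ q, 0 ≤ f q ∧ f q ≤ 1) {e : ℝ} (he0 : 0 ≤ e) (he1 : e ≤ 1/2) :
    P {θ | (1 + e) * ((∑ q, w q * f q) * t) ≤ ∑ τ : Fin t, f (X τ θ)}
      ≤ ENNReal.ofReal (Real.exp (-((∑ q, w q * f q) * t * e^2 / 3))) := by
  set m := ∑ q, w q * f q with hm
  have hm0 : 0 ≤ m := Finset.sum_nonneg fun q _ => mul_nonneg (hw q) (hf01 q).1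
  have h1e : (0:ℝ) < 1 + e := by linarith
  have hc : (0:ℝ) ≤ Real.log (1 + e) := Real.log_nonneg (by linarith)
  refine (chernoff_upper_fin hmeas hw hlaw hiid f hc ((1 + e) * (m * t))).trans ?_
  apply ENNReal.ofReal_le_ofReal
  have hSig : ∑ q, w q * Real.exp (Real.log (1 + e) * f q) ≤ Real.exp (m * e) := by
    refine (chord_sum_le hw hwsum f hf01 _).trans ?_
    rw [Real.exp_log h1e]
    have : 1 - m + m * (1 + e) = m * e + 1 := by ring
    rw [this]
    exact Real.add_one_le_exp _
  calc Real.exp (-(Real.log (1+e) * ((1+e) * (m * t)))) *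
        (∑ q, w q * Real.exp (Real.log (1+e) * f q))^t
      ≤ Real.exp (-(Real.log (1+e) * ((1+e) * (m * t)))) * (Real.exp (m * e))^t := by
        apply mul_le_mul_of_nonneg_left _ (Real.exp_pos _).le
        exact pow_le_pow_left₀ (mgfv_nonneg hw f _) hSig t
    _ = Real.exp (-(Real.log (1+e) * ((1+e) * (m * t))) + t * (m * e)) := by
        rw [← Real.exp_nat_mul, ← Real.exp_add]
    _ ≤ Real.exp (-(m * t * e^2 / 3)) := by
        apply Real.exp_le_exp.2
        have hkey := chernoff_up_ineq he0 he1
        have hmt : 0 ≤ m * t := mul_nonneg hm0 (Nat.cast_nonneg t)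
        nlinarith [mul_le_mul_of_nonneg_left hkey hmt]

lemma tail_rel_lower [Nonempty Q] (hmeas : ∀ τ, Measurable (X τ)) {w : Q → ℝ}
    (hw : ∀ q, 0 ≤ w q) (hwsum : ∑ q, w q = 1)
    (hlaw : ∀ τ q, P {θ | X τ θ = q} = ENNReal.ofReal (w q))
    (hiid : iIndepFun X P)
    (f : Q → ℝ) (hf01 : ∀ q, 0 ≤ f q ∧ f q ≤ 1) {e : ℝ} (he0 : 0 ≤ e) (he1 : e ≤ 1/2) :
    P {θ | (∑ τ : Fin t, f (X τ θ)) ≤ (1 - e) * ((∑ q, w q * f q) * t)}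
      ≤ ENNReal.ofReal (Real.exp (-((∑ q, w q * f q) * t * e^2 / 3))) := by
  set m := ∑ q, w q * f q with hm
  have hm0 : 0 ≤ m := Finset.sum_nonneg fun q _ => mul_nonneg (hw q) (hf01 q).1
  have h1e : (0:ℝ) < 1 - e := by linarith
  have hc : Real.log (1 - e) ≤ 0 := Real.log_nonpos (by linarith) (by linarith)
  refine (chernoff_lower_fin hmeas hw hlaw hiid f hc ((1 - e) * (m * t))).trans ?_
  apply ENNReal.ofReal_le_ofReal
  have hSig : ∑ q, w q * Real.exp (Real.log (1 - e) * f q) ≤ Real.exp (-(m * e)) := by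
    refine (chord_sum_le hw hwsum f hf01 _).trans ?_
    rw [Real.exp_log h1e]
    have : 1 - m + m * (1 - e) = -(m * e) + 1 := by ring
    rw [this]
    exact Real.add_one_le_exp _
  calc Real.exp (-(Real.log (1-e) * ((1-e) * (m * t)))) *
        (∑ q, w q * Real.exp (Real.log (1-e) * f q))^t
      ≤ Real.exp (-(Real.log (1-e) * ((1-e) * (m * t)))) * (Real.exp (-(m * e)))^t := by
        apply mul_le_mul_of_nonneg_left _ (Real.exp_pos _).le
        exact pow_le_pow_left₀ (mgfv_nonneg hw f _) hSig t
    _ = Real.exp (-(Real.log (1-e) * ((1-e) * (m * t))) + t * (-(m * e))) := by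
        rw [← Real.exp_nat_mul, ← Real.exp_add]
    _ ≤ Real.exp (-(m * t * e^2 / 3)) := by
        apply Real.exp_le_exp.2
        have hkey := chernoff_lo_ineq he0 he1
        have hmt : 0 ≤ m * t := mul_nonneg hm0 (Nat.cast_nonneg t)
        nlinarith [mul_le_mul_of_nonneg_left hkey hmt]

end tails

end auxconc

set_option maxHeartbeats 2000000 in
/-- Lemma 3.2, concentration: let `(ω_τ, s_τ)`, `τ = 1, …, t`, be i.i.d. pairs
with joint law `P(ω, s) = μ(ω)·π(s|ω)`.  If `√(3·log(2|S|t)/(π(s)·t)) < 1/2` for every sent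
signal `s`, then with probability at least `1 - 2/t`, every sent signal `s` is realized at least
once and the empirical utility `v̂(a, s)` of every action `a` satisfies
`|v̂(a,s) - v(a, μ_s)| ≤ 2·√(3·log(2|S|t)/(π(s)·t)) + (2/π(s))·√(log(2|S||A|t)/(2t))`. -/
theorem empirical_utility_concentration
    {Ω S A : Type*} [Fintype Ω] [Fintype S] [Fintype A]
    [Nonempty Ω] [Nonempty S] [Nonempty A]
    [MeasurableSpace Ω] [DiscreteMeasurableSpace Ω]
    [MeasurableSpace S] [DiscreteMeasurableSpace S]
    (μ : Ω → ℝ) (hμ : IsProb μ)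
    (π : Ω → S → ℝ) (hπ : IsDist π)
    (v : A → Ω → ℝ) (hv : ∀ a ω, 0 ≤ v a ω ∧ v a ω ≤ 1)
    (t : ℕ) (ht : 1 ≤ t)
    {Θ : Type*} [MeasurableSpace Θ] (P : Measure Θ) [IsProbabilityMeasure P]
    (X : Fin t → Θ → Ω × S)
    (hmeas : ∀ τ, Measurable (X τ))
    (hiid : iIndepFun X P)
    (hlaw : ∀ τ ω s, P {θ | X τ θ = (ω, s)} = ENNReal.ofReal (μ ω * π ω s))
    (hsmall : ∀ s : S, 0 < marg μ π s →
      Real.sqrt (3 * Real.log (2 * (Fintype.card S : ℝ) * t) / (marg μ π s * t)) < 1 / 2) :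
    ENNReal.ofReal (1 - 2 / (t : ℝ)) ≤
      P {θ | ∀ s : S, 0 < marg μ π s →
        0 < (Finset.univ.filter (fun τ : Fin t => (X τ θ).2 = s)).card ∧
        ∀ a : A,
          |(1 / ((Finset.univ.filter (fun τ : Fin t => (X τ θ).2 = s)).card : ℝ)) *
              (∑ τ ∈ Finset.univ.filter (fun τ : Fin t => (X τ θ).2 = s), v a (X τ θ).1)
            - vPost μ π v a s|
          ≤ 2 * Real.sqrt (3 * Real.log (2 * (Fintype.card S : ℝ) * t) / (marg μ π s * t))
            + (2 / marg μ π s) *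
                Real.sqrt (Real.log (2 * (Fintype.card S : ℝ) * (Fintype.card A : ℝ) * t) /
                  (2 * t))} := by
  classical
  have htR : (0:ℝ) < t := by exact_mod_cast Nat.lt_of_lt_of_le Nat.zero_lt_one ht
  have h1S : (1:ℝ) ≤ (Fintype.card S : ℝ) := by exact_mod_cast Fintype.card_pos
  have h1A : (1:ℝ) ≤ (Fintype.card A : ℝ) := by exact_mod_cast Fintype.card_pos
  have h1t : (1:ℝ) ≤ (t : ℝ) := by exact_mod_cast ht
  set nS : ℝ := (Fintype.card S : ℝ) with hnS
  set nA : ℝ := (Fintype.card A : ℝ) with hnA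
  set L : ℝ := Real.log (2 * nS * t) with hLdef
  set LB : ℝ := Real.log (2 * nS * nA * t) with hLBdef
  have hL0 : 0 ≤ L := Real.log_nonneg (by nlinarith)
  have hSA1 : (1:ℝ) ≤ nS * nA := by nlinarith
  have hLB0 : 0 ≤ LB := Real.log_nonneg (by nlinarith)
  set w : Ω × S → ℝ := fun q => μ q.1 * π q.1 q.2 with hwdef
  have hw : ∀ q, 0 ≤ w q := fun q => mul_nonneg (hμ.1 q.1) (hπ.1 q.1 q.2)
  have hwsum : ∑ q, w q = 1 := by
    rw [hwdef, Fintype.sum_prod_type]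
    calc ∑ ω, ∑ s, μ ω * π ω s = ∑ ω, μ ω := by
          apply Finset.sum_congr rfl; intro ω _
          rw [← Finset.mul_sum, hπ.2 ω, mul_one]
      _ = 1 := hμ.2
  have hlaw' : ∀ τ (q : Ω × S), P {θ | X τ θ = q} = ENNReal.ofReal (w q) := by
    intro τ q
    simpa [hwdef] using hlaw τ q.1 q.2
  have hmarg_nonneg : ∀ s : S, 0 ≤ marg μ π s :=
    fun s => Finset.sum_nonneg fun ω _ => mul_nonneg (hμ.1 ω) (hπ.1 ω s)
  have hmarg_le_one : ∀ s : S, marg μ π s ≤ 1 := by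
    intro s
    have hsum : ∑ s', marg μ π s' = 1 := by
      calc ∑ s', marg μ π s' = ∑ s', ∑ ω, μ ω * π ω s' := rfl
        _ = ∑ ω, ∑ s', μ ω * π ω s' := Finset.sum_comm
        _ = ∑ ω, μ ω := by
            apply Finset.sum_congr rfl; intro ω _
            rw [← Finset.mul_sum, hπ.2 ω, mul_one]
        _ = 1 := hμ.2
    rw [← hsum]
    exact Finset.single_le_sum (fun s' _ => hmarg_nonneg s') (Finset.mem_univ s)
  set d : ℝ := Real.sqrt (LB / (2 * t)) with hd_def
  have hd0 : 0 ≤ d := Real.sqrt_nonneg _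
  have hd2 : d^2 = LB / (2*t) := Real.sq_sqrt (by positivity)
  -- indicator functions
  set find : S → Ω × S → ℝ := fun s q => if q.2 = s then 1 else 0 with hfind_def
  set gua : A → S → Ω × S → ℝ := fun a s q => (if q.2 = s then 1 else 0) * v a q.1 with hgua_def
  set gua' : A → S → Ω × S → ℝ := fun a s q => 1 - gua a s q with hgua'_def
  have hfind01 : ∀ s q, 0 ≤ find s q ∧ find s q ≤ 1 := by
    intro s q; by_cases h : q.2 = s <;> simp [hfind_def, h]
  have hgua01 : ∀ a s q, 0 ≤ gua a s q ∧ gua a s q ≤ 1 := by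
    intro a s q
    by_cases h : q.2 = s <;> simp [hgua_def, h, (hv a q.1).1, (hv a q.1).2]
  have hgua'01 : ∀ a s q, 0 ≤ gua' a s q ∧ gua' a s q ≤ 1 := by
    intro a s q
    have := hgua01 a s q
    constructor <;> simp [hgua'_def] <;> [exact this.2; exact this.1]
  have hmean_find : ∀ s, ∑ q, w q * find s q = marg μ π s := by
    intro s
    rw [Fintype.sum_prod_type]
    apply Finset.sum_congr rfl
    intro ω _
    have hterm : ∀ s' : S, w (ω, s') * find s (ω, s')
        = if s' = s then μ ω * π ω s else 0 := by
      intro s'; by_cases h : s' = s <;> simp [hwdef, hfind_def, h]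
    rw [Finset.sum_congr rfl (fun s' _ => hterm s'), Finset.sum_ite_eq' Finset.univ s]
    simp [marg]
  have hmean_gua : ∀ a s, ∑ q, w q * gua a s q = ∑ ω, μ ω * π ω s * v a ω := by
    intro a s
    rw [Fintype.sum_prod_type]
    apply Finset.sum_congr rfl
    intro ω _
    have hterm : ∀ s' : S, w (ω, s') * gua a s (ω, s')
        = if s' = s then μ ω * π ω s * v a ω else 0 := by
      intro s'; by_cases h : s' = s <;> simp [hwdef, hgua_def, h, mul_assoc]
    rw [Finset.sum_congr rfl (fun s' _ => hterm s'), Finset.sum_ite_eq' Finset.univ s]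
    simp
  have hmean_gua' : ∀ a s, ∑ q, w q * gua' a s q = 1 - ∑ q, w q * gua a s q := by
    intro a s
    have : ∀ q, w q * gua' a s q = w q - w q * gua a s q := by
      intro q; simp [hgua'_def]; ring
    rw [Finset.sum_congr rfl (fun q _ => this q), Finset.sum_sub_distrib, hwsum]
  have hV0 : ∀ a s, 0 ≤ ∑ q, w q * gua a s q :=
    fun a s => Finset.sum_nonneg fun q _ => mul_nonneg (hw q) (hgua01 a s q).1
  have hVle : ∀ a s, ∑ q, w q * gua a s q ≤ marg μ π s := by
    intro a s
    rw [← hmean_find s]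
    apply Finset.sum_le_sum
    intro q _
    apply mul_le_mul_of_nonneg_left _ (hw q)
    by_cases h : q.2 = s <;> simp [hgua_def, hfind_def, h, (hv a q.1).1, (hv a q.1).2]
  -- the events
  set S0 : Finset S := Finset.univ.filter (fun s : S => 0 < marg μ π s) with hS0def
  set HiA : S → Set Θ := fun s =>
    {θ | (1 + Real.sqrt (3 * L / (marg μ π s * t))) * ((∑ q, w q * find s q) * t)
      ≤ ∑ τ : Fin t, find s (X τ θ)} with hHiAdef
  set LoA : S → Set Θ := fun s =>
    {θ | (∑ τ : Fin t, find s (X τ θ))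
      ≤ (1 - Real.sqrt (3 * L / (marg μ π s * t))) * ((∑ q, w q * find s q) * t)} with hLoAdef
  set HiB : S × A → Set Θ := fun x =>
    {θ | ((∑ q, w q * gua x.2 x.1 q) + d) * t ≤ ∑ τ : Fin t, gua x.2 x.1 (X τ θ)} with hHiBdef
  set LoB : S × A → Set Θ := fun x =>
    {θ | ((∑ q, w q * gua' x.2 x.1 q) + d) * t ≤ ∑ τ : Fin t, gua' x.2 x.1 (X τ θ)} with hLoBdef
  set Bad : Set Θ := ((⋃ s ∈ S0, HiA s) ∪ (⋃ s ∈ S0, LoA s)) ∪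
      ((⋃ x ∈ S0 ×ˢ (Finset.univ : Finset A), HiB x) ∪
        (⋃ x ∈ S0 ×ˢ (Finset.univ : Finset A), LoB x)) with hBadDef
  have hWmeas : ∀ g : Ω × S → ℝ, Measurable (fun θ => ∑ τ : Fin t, g (X τ θ)) :=
    fun g => Finset.measurable_sum _ (fun τ _ => (Measurable.of_discrete (f := g)).comp (hmeas τ))
  have hBadMeas : MeasurableSet Bad := by
    rw [hBadDef]
    apply MeasurableSet.union <;> apply MeasurableSet.union <;>
      apply Finset.measurableSet_biUnion <;> intro x _
    · exact measurableSet_le measurable_const (hWmeas _)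
    · exact measurableSet_le (hWmeas _) measurable_const
    · exact measurableSet_le measurable_const (hWmeas _)
    · exact measurableSet_le measurable_const (hWmeas _)
  -- per-event bounds
  have hepsfacts : ∀ s ∈ S0, 0 ≤ Real.sqrt (3 * L / (marg μ π s * t)) ∧
      Real.sqrt (3 * L / (marg μ π s * t)) ≤ 1/2 ∧
      (Real.sqrt (3 * L / (marg μ π s * t)))^2 = 3 * L / (marg μ π s * t) := by
    intro s hs
    have hp : 0 < marg μ π s := (Finset.mem_filter.1 hs).2
    exact ⟨Real.sqrt_nonneg _, le_of_lt (hsmall s hp), Real.sq_sqrt (by positivity)⟩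
  have hexpA : ∀ s ∈ S0,
      Real.exp (-((∑ q, w q * find s q) * t * (Real.sqrt (3 * L / (marg μ π s * t)))^2 / 3))
        ≤ 1 / (2 * nS * t) := by
    intro s hs
    have hp : 0 < marg μ π s := (Finset.mem_filter.1 hs).2
    obtain ⟨_, _, hsq⟩ := hepsfacts s hs
    rw [hmean_find s, hsq]
    have harg : marg μ π s * t * (3 * L / (marg μ π s * t)) / 3 = L := by
      field_simp
    rw [harg, Real.exp_neg, Real.exp_log (by positivity), one_div]
  have hHiAbound : ∀ s ∈ S0, P (HiA s) ≤ ENNReal.ofReal (1 / (2 * nS * t)) := by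
    intro s hs
    obtain ⟨he0, he1, _⟩ := hepsfacts s hs
    rw [hHiAdef]
    exact (tail_rel_upper hmeas hw hwsum hlaw' hiid (find s) (hfind01 s) he0 he1).trans
      (ENNReal.ofReal_le_ofReal (hexpA s hs))
  have hLoAbound : ∀ s ∈ S0, P (LoA s) ≤ ENNReal.ofReal (1 / (2 * nS * t)) := by
    intro s hs
    obtain ⟨he0, he1, _⟩ := hepsfacts s hs
    rw [hLoAdef]
    exact (tail_rel_lower hmeas hw hwsum hlaw' hiid (find s) (hfind01 s) he0 he1).trans
      (ENNReal.ofReal_le_ofReal (hexpA s hs))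
  have hexpB : Real.exp (-(2 * (t:ℝ) * d^2)) ≤ 1 / (2 * nS * nA * t) := by
    have harg : 2 * (t:ℝ) * d^2 = LB := by
      rw [hd2]; field_simp
    rw [harg, Real.exp_neg, Real.exp_log (by positivity), one_div]
  have hHiBbound : ∀ x ∈ S0 ×ˢ (Finset.univ : Finset A),
      P (HiB x) ≤ ENNReal.ofReal (1 / (2 * nS * nA * t)) := by
    intro x _
    rw [hHiBdef]
    exact (tail_bound_upper hmeas hw hwsum hlaw' hiid (gua x.2 x.1) (hgua01 x.2 x.1) hd0).trans
      (ENNReal.ofReal_le_ofReal hexpB)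
  have hLoBbound : ∀ x ∈ S0 ×ˢ (Finset.univ : Finset A),
      P (LoB x) ≤ ENNReal.ofReal (1 / (2 * nS * nA * t)) := by
    intro x _
    rw [hLoBdef]
    exact (tail_bound_upper hmeas hw hwsum hlaw' hiid (gua' x.2 x.1) (hgua'01 x.2 x.1) hd0).trans
      (ENNReal.ofReal_le_ofReal hexpB)
  -- union bound
  have hgroup : ∀ (I : Finset S) (E : S → Set Θ) (b : ℝ), 0 ≤ b →
      (∀ s ∈ I, P (E s) ≤ ENNReal.ofReal b) →
      P (⋃ s ∈ I, E s) ≤ (I.card : ENNReal) * ENNReal.ofReal b := by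
    intro I E b _ hb
    calc P (⋃ s ∈ I, E s) ≤ ∑ s ∈ I, P (E s) := measure_biUnion_finset_le I E
      _ ≤ ∑ _s ∈ I, ENNReal.ofReal b := Finset.sum_le_sum hb
      _ = (I.card : ENNReal) * ENNReal.ofReal b := by
          rw [Finset.sum_const, nsmul_eq_mul]
  have hgroup2 : ∀ (I : Finset (S × A)) (E : S × A → Set Θ) (b : ℝ), 0 ≤ b →
      (∀ x ∈ I, P (E x) ≤ ENNReal.ofReal b) →
      P (⋃ x ∈ I, E x) ≤ (I.card : ENNReal) * ENNReal.ofReal b := by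
    intro I E b _ hb
    calc P (⋃ x ∈ I, E x) ≤ ∑ x ∈ I, P (E x) := measure_biUnion_finset_le I E
      _ ≤ ∑ _x ∈ I, ENNReal.ofReal b := Finset.sum_le_sum hb
      _ = (I.card : ENNReal) * ENNReal.ofReal b := by
          rw [Finset.sum_const, nsmul_eq_mul]
  have hhalf : ∀ (n : ℕ) (c : ℝ), (0:ℝ) < c → (n:ℝ) ≤ c →
      (n : ENNReal) * ENNReal.ofReal (1 / (2 * c * t)) ≤ ENNReal.ofReal (1 / (2 * t)) := by
    intro n c hc hnc
    rw [← ENNReal.ofReal_natCast, ← ENNReal.ofReal_mul (by positivity)]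
    apply ENNReal.ofReal_le_ofReal
    rw [mul_one_div, div_le_div_iff₀ (by positivity) (by positivity)]
    nlinarith
  have hcardS : ((S0.card : ℕ) : ℝ) ≤ nS := by
    rw [hnS]; exact_mod_cast Finset.card_le_univ S0
  have hcardSA : (((S0 ×ˢ (Finset.univ : Finset A)).card : ℕ) : ℝ) ≤ nS * nA := by
    have := Finset.card_le_univ (S0 ×ˢ (Finset.univ : Finset A))
    rw [hnS, hnA]
    calc (((S0 ×ˢ (Finset.univ : Finset A)).card : ℕ) : ℝ)
        ≤ (Fintype.card (S × A) : ℝ) := by exact_mod_cast this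
      _ = (Fintype.card S : ℝ) * (Fintype.card A : ℝ) := by
          rw [Fintype.card_prod]; push_cast; ring
  have hBadBound : P Bad ≤ ENNReal.ofReal (2 / t) := by
    have h1 : P (⋃ s ∈ S0, HiA s) ≤ ENNReal.ofReal (1 / (2 * t)) :=
      (hgroup S0 HiA _ (by positivity) hHiAbound).trans
        (hhalf S0.card nS (by linarith) hcardS)
    have h2 : P (⋃ s ∈ S0, LoA s) ≤ ENNReal.ofReal (1 / (2 * t)) :=
      (hgroup S0 LoA _ (by positivity) hLoAbound).trans
        (hhalf S0.card nS (by linarith) hcardS)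
    have h3 : P (⋃ x ∈ S0 ×ˢ (Finset.univ : Finset A), HiB x) ≤ ENNReal.ofReal (1 / (2 * t)) := by
      refine (hgroup2 _ HiB _ (by positivity) hHiBbound).trans ?_
      have := hhalf (S0 ×ˢ (Finset.univ : Finset A)).card (nS * nA) (by nlinarith) hcardSA
      calc ((S0 ×ˢ (Finset.univ : Finset A)).card : ENNReal)
            * ENNReal.ofReal (1 / (2 * nS * nA * t))
          = ((S0 ×ˢ (Finset.univ : Finset A)).card : ENNReal)
            * ENNReal.ofReal (1 / (2 * (nS * nA) * t)) := by ring_nf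
        _ ≤ ENNReal.ofReal (1 / (2 * t)) := this
    have h4 : P (⋃ x ∈ S0 ×ˢ (Finset.univ : Finset A), LoB x) ≤ ENNReal.ofReal (1 / (2 * t)) := by
      refine (hgroup2 _ LoB _ (by positivity) hLoBbound).trans ?_
      have := hhalf (S0 ×ˢ (Finset.univ : Finset A)).card (nS * nA) (by nlinarith) hcardSA
      calc ((S0 ×ˢ (Finset.univ : Finset A)).card : ENNReal)
            * ENNReal.ofReal (1 / (2 * nS * nA * t))
          = ((S0 ×ˢ (Finset.univ : Finset A)).card : ENNReal)
            * ENNReal.ofReal (1 / (2 * (nS * nA) * t)) := by ring_nf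
        _ ≤ ENNReal.ofReal (1 / (2 * t)) := this
    calc P Bad ≤ P ((⋃ s ∈ S0, HiA s) ∪ (⋃ s ∈ S0, LoA s)) +
          P ((⋃ x ∈ S0 ×ˢ (Finset.univ : Finset A), HiB x) ∪
            (⋃ x ∈ S0 ×ˢ (Finset.univ : Finset A), LoB x)) := by
          rw [hBadDef]; exact measure_union_le _ _
      _ ≤ (P (⋃ s ∈ S0, HiA s) + P (⋃ s ∈ S0, LoA s)) +
          (P (⋃ x ∈ S0 ×ˢ (Finset.univ : Finset A), HiB x) +
            P (⋃ x ∈ S0 ×ˢ (Finset.univ : Finset A), LoB x)) :=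
          add_le_add (measure_union_le _ _) (measure_union_le _ _)
      _ ≤ (ENNReal.ofReal (1 / (2*t)) + ENNReal.ofReal (1 / (2*t))) +
          (ENNReal.ofReal (1 / (2*t)) + ENNReal.ofReal (1 / (2*t))) :=
          add_le_add (add_le_add h1 h2) (add_le_add h3 h4)
      _ = ENNReal.ofReal (2 / t) := by
          have h14 : (0:ℝ) ≤ 1/(2*(t:ℝ)) := by positivity
          have h12 : (0:ℝ) ≤ 1/(t:ℝ) := by positivity
          have e1 : ENNReal.ofReal (1/(2*(t:ℝ))) + ENNReal.ofReal (1/(2*(t:ℝ)))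
              = ENNReal.ofReal (1/(t:ℝ)) := by
            rw [← ENNReal.ofReal_add h14 h14]
            congr 1
            field_simp
            norm_num
          have e2 : ENNReal.ofReal (1/(t:ℝ)) + ENNReal.ofReal (1/(t:ℝ))
              = ENNReal.ofReal (2/(t:ℝ)) := by
            rw [← ENNReal.ofReal_add h12 h12]
            congr 1
            field_simp
            norm_num
          rw [e1]
          exact e2
  -- complement
  have hcompl : ENNReal.ofReal (1 - 2 / (t:ℝ)) ≤ P Badᶜ := by
    rcases le_or_gt (1 - 2/(t:ℝ)) 0 with hle | hpos
    · rw [ENNReal.ofReal_of_nonpos hle]; exact zero_le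
    · rw [MeasureTheory.prob_compl_eq_one_sub hBadMeas]
      have hadd : ENNReal.ofReal (1 - 2/(t:ℝ)) + P Bad ≤ 1 := by
        calc ENNReal.ofReal (1 - 2/(t:ℝ)) + P Bad
            ≤ ENNReal.ofReal (1 - 2/(t:ℝ)) + ENNReal.ofReal (2/(t:ℝ)) :=
              add_le_add le_rfl hBadBound
          _ = ENNReal.ofReal 1 := by
              rw [← ENNReal.ofReal_add (by linarith) (by positivity)]
              norm_num
          _ = 1 := ENNReal.ofReal_one
      exact ENNReal.le_sub_of_add_le_right (MeasureTheory.measure_ne_top P Bad) hadd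
  refine le_trans hcompl (MeasureTheory.measure_mono ?_)
  -- pointwise: complement of Bad is inside the goal event
  intro θ hθ
  simp only [hBadDef, Set.mem_compl_iff, Set.mem_union, not_or] at hθ
  obtain ⟨⟨hn1, hn2⟩, hn3, hn4⟩ := hθ
  simp only [Set.mem_setOf_eq]
  intro s hp
  have hsS0 : s ∈ S0 := by rw [hS0def]; exact Finset.mem_filter.2 ⟨Finset.mem_univ s, hp⟩
  have hnHiA : ¬ ((1 + Real.sqrt (3 * L / (marg μ π s * t))) * ((∑ q, w q * find s q) * t)
      ≤ ∑ τ : Fin t, find s (X τ θ)) := by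
    intro h
    exact hn1 (Set.mem_iUnion₂.2 ⟨s, hsS0, by rw [hHiAdef]; exact h⟩)
  have hnLoA : ¬ ((∑ τ : Fin t, find s (X τ θ))
      ≤ (1 - Real.sqrt (3 * L / (marg μ π s * t))) * ((∑ q, w q * find s q) * t)) := by
    intro h
    exact hn2 (Set.mem_iUnion₂.2 ⟨s, hsS0, by rw [hLoAdef]; exact h⟩)
  push_neg at hnHiA hnLoA
  rw [hmean_find s] at hnHiA hnLoA
  set e : ℝ := Real.sqrt (3 * L / (marg μ π s * t)) with he_def
  have he0 : 0 ≤ e := Real.sqrt_nonneg _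
  have he1 : e < 1/2 := hsmall s hp
  set M : ℝ := ∑ τ : Fin t, find s (X τ θ) with hM_def
  have hMlow : (1 - e) * (marg μ π s * t) < M := hnLoA
  have hMhigh : M < (1 + e) * (marg μ π s * t) := hnHiA
  have hptpos : 0 < marg μ π s * t := mul_pos hp htR
  have hMhalf : marg μ π s * t / 2 < M := by nlinarith
  have hMpos : 0 < M := by nlinarith
  have hcard : ((Finset.univ.filter (fun τ : Fin t => (X τ θ).2 = s)).card : ℝ) = M := by
    rw [hM_def, Finset.card_filter]
    push_cast
    apply Finset.sum_congr rfl
    intro τ _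
    by_cases h : (X τ θ).2 = s <;> simp [hfind_def, h]
  constructor
  · have : (0:ℝ) < ((Finset.univ.filter (fun τ : Fin t => (X τ θ).2 = s)).card : ℝ) := by
      rw [hcard]; exact hMpos
    exact_mod_cast this
  intro a
  -- part B facts
  have hxSA : (s, a) ∈ S0 ×ˢ (Finset.univ : Finset A) :=
    Finset.mem_product.2 ⟨hsS0, Finset.mem_univ a⟩
  have hnHiB : ¬ (((∑ q, w q * gua a s q) + d) * t ≤ ∑ τ : Fin t, gua a s (X τ θ)) := by
    intro h
    exact hn3 (Set.mem_iUnion₂.2 ⟨(s, a), hxSA, by rw [hHiBdef]; exact h⟩)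
  have hnLoB : ¬ (((∑ q, w q * gua' a s q) + d) * t ≤ ∑ τ : Fin t, gua' a s (X τ θ)) := by
    intro h
    exact hn4 (Set.mem_iUnion₂.2 ⟨(s, a), hxSA, by rw [hLoBdef]; exact h⟩)
  push_neg at hnHiB hnLoB
  set V : ℝ := ∑ q, w q * gua a s q with hV_def
  set T : ℝ := ∑ τ : Fin t, gua a s (X τ θ) with hT_def
  have hsum' : ∑ τ : Fin t, gua' a s (X τ θ) = t - T := by
    rw [hT_def]
    have : ∀ τ : Fin t, gua' a s (X τ θ) = 1 - gua a s (X τ θ) := by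
      intro τ; rw [hgua'_def]
    rw [Finset.sum_congr rfl (fun τ _ => this τ), Finset.sum_sub_distrib]
    simp
  rw [hmean_gua' a s, ← hV_def, hsum'] at hnLoB
  have hTlow : (V - d) * t < T := by nlinarith
  have hThigh : T < (V + d) * t := hnHiB
  have habsT : |T - V * t| ≤ d * t := by
    rw [abs_le]; constructor <;> nlinarith
  have habsM : |marg μ π s * t - M| ≤ e * (marg μ π s * t) := by
    rw [abs_le]; constructor <;> nlinarith
  have hV0' : 0 ≤ V := hV0 a s
  have hVle' : V ≤ marg μ π s := hVle a s
  -- rewrite goal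
  have hTfilter : ∑ τ ∈ Finset.univ.filter (fun τ : Fin t => (X τ θ).2 = s), v a (X τ θ).1
      = T := by
    rw [hT_def, Finset.sum_filter]
    apply Finset.sum_congr rfl
    intro τ _
    by_cases h : (X τ θ).2 = s <;> simp [hgua_def, h]
  have hvPost : vPost μ π v a s = V / marg μ π s := by
    rw [hV_def, hmean_gua a s]
    simp only [vPost, post]
    rw [Finset.sum_div]
    apply Finset.sum_congr rfl
    intro ω _
    rw [div_mul_eq_mul_div]
  rw [hcard, hTfilter, hvPost]
  -- final algebra
  have hiden : 1 / M * T - V / marg μ π s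
      = (marg μ π s * (T - V * t) + V * (marg μ π s * t - M)) / (M * marg μ π s) := by
    field_simp
    ring
  rw [hiden, abs_div, abs_of_pos (mul_pos hMpos hp)]
  have hnum : |marg μ π s * (T - V * t) + V * (marg μ π s * t - M)|
      ≤ marg μ π s * (d * t) + marg μ π s * (e * (marg μ π s * t)) := by
    calc |marg μ π s * (T - V * t) + V * (marg μ π s * t - M)|
        ≤ |marg μ π s * (T - V * t)| + |V * (marg μ π s * t - M)| := abs_add_le _ _
      _ = marg μ π s * |T - V * t| + V * |marg μ π s * t - M| := by
          rw [abs_mul, abs_mul, abs_of_pos hp, abs_of_nonneg hV0']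
      _ ≤ marg μ π s * (d * t) + marg μ π s * (e * (marg μ π s * t)) := by
          have h1 := mul_le_mul_of_nonneg_left habsT hp.le
          have h2 : V * |marg μ π s * t - M| ≤ marg μ π s * (e * (marg μ π s * t)) := by
            calc V * |marg μ π s * t - M| ≤ V * (e * (marg μ π s * t)) :=
                  mul_le_mul_of_nonneg_left habsM hV0'
              _ ≤ marg μ π s * (e * (marg μ π s * t)) :=
                  mul_le_mul_of_nonneg_right hVle' (by positivity)
          linarith
  calc |marg μ π s * (T - V * t) + V * (marg μ π s * t - M)| / (M * marg μ π s)
      ≤ (marg μ π s * (d * t) + marg μ π s * (e * (marg μ π s * t))) / (M * marg μ π s) := by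
        gcongr
      _ ≤ (marg μ π s * (d * t) + marg μ π s * (e * (marg μ π s * t)))
          / ((marg μ π s * t / 2) * marg μ π s) := by
        gcongr
      _ = 2 * e + 2 / marg μ π s * d := by
        field_simp
        ring
end
end
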